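/- arXiv:2601.03387 — 7 statements merged into one kernel-verified Lean document; each statement's English description precedes it below -/
import Mathlib

section
/- Let N ≥ 1 and let W_1,…,W_N be i.i.d. Exp(1) random variables and θ_1,…,θ_N be i.i.d. U(−π/4, π/4) random variables, with all 2N variables mutually independent. Define Z_i = √(2 W_i) · cos(θ_i + π/4), Z̃_i = √(2 W_i) · sin(θ_i + π/4), T = N^{−1/2} Σ_{i=1}^N Z_i and T̃ = N^{−1/2} Σ_{i=1}^N Z̃_i. Then for every ρ > 0, 1 − E[(1 − Q(√ρ · T))·(1 − Q(√ρ · T̃))] = 2·E[Q(√ρ · T)] − (E[Q(√ρ · T)])². (Exact SEP formula of Proposition 1 for the QPSK-modulated 2-bit phase-quantized SIMO-MRC system.) -/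
open MeasureTheory ProbabilityTheory Real Filter Asymptotics
open scoped ENNReal NNReal

/-- The Gaussian Q-function `Q(x) = (1/√(2π)) ∫_x^∞ e^{−t²/2} dt`. -/
noncomputable def gaussQ (x : ℝ) : ℝ :=
  (Real.sqrt (2 * Real.pi))⁻¹ * ∫ t in Set.Ioi x, Real.exp (-t ^ 2 / 2)

/-- The uniform probability measure on the open interval `(a, b)`. -/
noncomputable def unifOn (a b : ℝ) : Measure ℝ :=
  (ENNReal.ofReal (b - a))⁻¹ • (volume.restrict (Set.Ioo a b))

namespace SEP1

open Set

/-! ### Basic facts about `gaussQ` -/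

lemma integrable_gauss : Integrable (fun t : ℝ => Real.exp (-t ^ 2 / 2)) := by
  have h := integrable_exp_neg_mul_sq (by norm_num : (0:ℝ) < 1/2)
  convert h using 2 with t
  ring_nf

lemma gaussQ_nonneg (x : ℝ) : 0 ≤ gaussQ x := by
  apply mul_nonneg (by positivity)
  exact setIntegral_nonneg measurableSet_Ioi (fun t _ => (Real.exp_pos _).le)

lemma gaussQ_le_one (x : ℝ) : gaussQ x ≤ 1 := by
  have h2π : (0:ℝ) < Real.sqrt (2*π) := Real.sqrt_pos.mpr (by positivity)
  have hle : ∫ t in Set.Ioi x, Real.exp (-t^2/2) ≤ ∫ t, Real.exp (-t^2/2) :=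
    setIntegral_le_integral integrable_gauss
      (by filter_upwards with t using (Real.exp_pos _).le)
  have hval : ∫ t : ℝ, Real.exp (-t^2/2) = Real.sqrt (2*π) := by
    have h := integral_gaussian (1/2)
    rw [show π / (1/2 : ℝ) = 2*π by ring] at h
    rw [← h]
    congr 1 with t
    ring_nf
  calc gaussQ x ≤ (Real.sqrt (2*π))⁻¹ * Real.sqrt (2*π) := by
        rw [gaussQ, ← hval]
        exact mul_le_mul_of_nonneg_left hle (by positivity)
    _ = 1 := inv_mul_cancel₀ h2π.ne'

lemma gaussQ_antitone : Antitone gaussQ := by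
  intro x y hxy
  apply mul_le_mul_of_nonneg_left _ (by positivity)
  apply setIntegral_mono_set integrable_gauss.integrableOn
  · filter_upwards with t using (Real.exp_pos _).le
  · exact HasSubset.Subset.eventuallyLE (Set.Ioi_subset_Ioi hxy)

lemma gaussQ_measurable : Measurable gaussQ := gaussQ_antitone.measurable

/-! ### `unifOn` is a probability measure -/

lemma isProbability_unifOn : IsProbabilityMeasure (unifOn (-(π/4)) (π/4)) := by
  constructor
  have hpi : π/4 - -(π/4) = π/2 := by ring
  rw [unifOn]
  simp only [Measure.smul_apply, smul_eq_mul, Measure.restrict_apply MeasurableSet.univ,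
    Set.univ_inter, Real.volume_Ioo, hpi]
  rw [ENNReal.inv_mul_cancel]
  · simp only [ne_eq, ENNReal.ofReal_eq_zero, not_le]
    positivity
  · exact ENNReal.ofReal_ne_top

/-! ### Half-normal measure -/

noncomputable def hnPDF : ℝ → ℝ≥0∞ := fun x =>
  ENNReal.ofReal ((Set.Ioi (0:ℝ)).indicator
    (fun y => Real.sqrt (2/π) * Real.exp (-y ^ 2 / 2)) x)

lemma hnPDF_measurable : Measurable hnPDF :=
  ENNReal.measurable_ofReal.comp
    ((by fun_prop : Measurable fun y : ℝ => Real.sqrt (2/π) * Real.exp (-y ^ 2 / 2)).indicator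
      measurableSet_Ioi)

noncomputable def hnMeasure : Measure ℝ := volume.withDensity hnPDF

instance : SFinite hnMeasure := by unfold hnMeasure; infer_instance

/-- The Box–Muller-type transformation. -/
noncomputable def Fmap : ℝ × ℝ → ℝ × ℝ := fun p =>
  (Real.sqrt (2 * p.1) * Real.cos (p.2 + π/4), Real.sqrt (2 * p.1) * Real.sin (p.2 + π/4))

lemma Fmap_measurable : Measurable Fmap := by
  unfold Fmap; fun_prop

/-- The domain rectangle. -/
def Sset : Set (ℝ × ℝ) := Set.Ioi (0:ℝ) ×ˢ Set.Ioo (-(π/4)) (π/4)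

lemma Sset_measurable : MeasurableSet Sset := measurableSet_Ioi.prod measurableSet_Ioo

noncomputable def Gmap : ℝ × ℝ → ℝ × ℝ := fun p => (Real.sqrt (2 * p.1), p.2 + π/4)

lemma Fmap_eq_polar (p : ℝ × ℝ) : Fmap p = polarCoord.symm (Gmap p) := rfl

noncomputable def Gderiv (p : ℝ × ℝ) : ℝ × ℝ →L[ℝ] ℝ × ℝ :=
  LinearMap.toContinuousLinearMap (Matrix.toLin (Module.Basis.finTwoProd ℝ) (Module.Basis.finTwoProd ℝ)
    !![(Real.sqrt (2 * p.1))⁻¹, 0; 0, 1])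

noncomputable def Bp (q : ℝ × ℝ) : ℝ × ℝ →L[ℝ] ℝ × ℝ :=
  LinearMap.toContinuousLinearMap (Matrix.toLin (Module.Basis.finTwoProd ℝ) (Module.Basis.finTwoProd ℝ)
    !![Real.cos q.2, -q.1 * Real.sin q.2; Real.sin q.2, q.1 * Real.cos q.2])

noncomputable def Fderiv (p : ℝ × ℝ) : ℝ × ℝ →L[ℝ] ℝ × ℝ := (Bp (Gmap p)).comp (Gderiv p)

lemma hasFDerivAt_Gmap {p : ℝ × ℝ} (hp : 0 < p.1) : HasFDerivAt Gmap (Gderiv p) p := by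
  have hsp : (0:ℝ) < Real.sqrt (2 * p.1) := Real.sqrt_pos.mpr (by positivity)
  unfold Gmap Gderiv
  rw [Matrix.toLin_finTwoProd_toContinuousLinearMap]
  have h1 : HasFDerivAt (fun x : ℝ × ℝ => Real.sqrt (2 * x.1))
      ((Real.sqrt (2 * p.1))⁻¹ • ContinuousLinearMap.fst ℝ ℝ ℝ) p := by
    have hsq : HasDerivAt Real.sqrt (1 / (2 * Real.sqrt (2 * p.1))) (2 * p.1) :=
      Real.hasDerivAt_sqrt (by positivity)
    have hlin : HasFDerivAt (fun x : ℝ × ℝ => 2 * x.1)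
        ((2:ℝ) • ContinuousLinearMap.fst ℝ ℝ ℝ) p := (hasFDerivAt_fst).const_mul 2
    have h := hsq.comp_hasFDerivAt p hlin
    have e : (Real.sqrt (2 * p.1))⁻¹ • ContinuousLinearMap.fst ℝ ℝ ℝ
        = (1 / (2 * Real.sqrt (2 * p.1))) • (2:ℝ) • ContinuousLinearMap.fst ℝ ℝ ℝ := by
      rw [smul_smul]
      congr 1
      field_simp
    rw [e]
    exact h
  have h2 : HasFDerivAt (fun x : ℝ × ℝ => x.2 + π/4) (ContinuousLinearMap.snd ℝ ℝ ℝ) p :=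
    (hasFDerivAt_snd).add_const _
  have := h1.prodMk h2
  simpa using this

lemma hasFDerivAt_Fmap {p : ℝ × ℝ} (hp : 0 < p.1) : HasFDerivAt Fmap (Fderiv p) p := by
  have h := (hasFDerivAt_polarCoord_symm (Gmap p)).comp p (hasFDerivAt_Gmap hp)
  exact h

lemma det_Fderiv {p : ℝ × ℝ} (hp : 0 < p.1) : (Fderiv p).det = 1 := by
  have hsp : (0:ℝ) < Real.sqrt (2 * p.1) := Real.sqrt_pos.mpr (by positivity)
  have hdB : (Bp (Gmap p)).det = Real.sqrt (2 * p.1) := by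
    conv_rhs => rw [← one_mul (Real.sqrt (2 * p.1)), ← Real.cos_sq_add_sin_sq (Gmap p).2]
    simp only [Bp, neg_mul, ContinuousLinearMap.det, LinearMap.coe_toContinuousLinearMap,
      LinearMap.det_toLin, Matrix.det_fin_two_of, sub_neg_eq_add, Gmap]
    ring
  have hdG : (Gderiv p).det = (Real.sqrt (2 * p.1))⁻¹ := by
    simp only [Gderiv, ContinuousLinearMap.det, LinearMap.coe_toContinuousLinearMap,
      LinearMap.det_toLin, Matrix.det_fin_two_of]
    ring
  have : (Fderiv p).det = (Bp (Gmap p)).det * (Gderiv p).det := by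
    simp only [Fderiv, ContinuousLinearMap.det, ContinuousLinearMap.toLinearMap_comp,
      LinearMap.det_comp]
  rw [this, hdB, hdG, mul_inv_cancel₀ hsp.ne']

lemma Fmap_injOn : Set.InjOn Fmap Sset := by
  rintro ⟨w, t⟩ ⟨hw, ht⟩ ⟨w', t'⟩ ⟨hw', ht'⟩ h
  simp only [Set.mem_Ioi, Set.mem_Ioo] at hw ht hw' ht'
  simp only [Fmap, Prod.mk.injEq] at h
  obtain ⟨h1, h2⟩ := h
  have hww' : w = w' := by
    have k1 : (Real.sqrt (2*w) * Real.cos (t + π/4))^2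
        + (Real.sqrt (2*w) * Real.sin (t + π/4))^2 = 2*w := by
      rw [mul_pow, mul_pow, ← mul_add, Real.cos_sq_add_sin_sq, Real.sq_sqrt (by positivity)]
      ring
    have k2 : (Real.sqrt (2*w') * Real.cos (t' + π/4))^2
        + (Real.sqrt (2*w') * Real.sin (t' + π/4))^2 = 2*w' := by
      rw [mul_pow, mul_pow, ← mul_add, Real.cos_sq_add_sin_sq, Real.sq_sqrt (by positivity)]
      ring
    rw [h1, h2, k2] at k1
    linarith
  subst hww'
  have hsp : (0:ℝ) < Real.sqrt (2*w) := Real.sqrt_pos.mpr (by positivity)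
  have hcos : Real.cos (t + π/4) = Real.cos (t' + π/4) := mul_left_cancel₀ hsp.ne' h1
  have hpi := Real.pi_pos
  have htt' : t + π/4 = t' + π/4 := by
    apply Real.injOn_cos ⟨by linarith [ht.1], by linarith [ht.2]⟩
      ⟨by linarith [ht'.1], by linarith [ht'.2]⟩ hcos
  have : t = t' := by linarith
  rw [this]

lemma Fmap_image : Fmap '' Sset = Set.Ioi (0:ℝ) ×ˢ Set.Ioi (0:ℝ) := by
  have hpi := Real.pi_pos
  ext ⟨x, y⟩
  constructor
  · rintro ⟨⟨w, t⟩, ⟨hw, ht⟩, heq⟩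
    rw [← heq]
    simp only [Set.mem_Ioi, Set.mem_Ioo] at hw ht
    have h1 : (0:ℝ) < Real.sqrt (2*w) := Real.sqrt_pos.mpr (by positivity)
    have hc : 0 < Real.cos (t + π/4) :=
      Real.cos_pos_of_mem_Ioo ⟨by linarith [ht.1], by linarith [ht.2]⟩
    have hs : 0 < Real.sin (t + π/4) :=
      Real.sin_pos_of_pos_of_lt_pi (by linarith [ht.1]) (by linarith [ht.2])
    exact ⟨mul_pos h1 hc, mul_pos h1 hs⟩
  · rintro ⟨hx, hy⟩
    simp only [Set.mem_Ioi] at hx hy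
    have hx2y2 : (0:ℝ) < x^2 + y^2 := by positivity
    have hsq2 : Real.sqrt (2 * ((x^2 + y^2)/2)) = Real.sqrt (x^2 + y^2) := by
      rw [show 2 * ((x^2 + y^2)/2) = x^2 + y^2 by ring]
    have h1p : Real.sqrt (1 + (y/x)^2) = Real.sqrt (x^2 + y^2) / x := by
      rw [show 1 + (y/x)^2 = (x^2 + y^2)/x^2 by field_simp,
        Real.sqrt_div hx2y2.le, Real.sqrt_sq hx.le]
    have hsnz : Real.sqrt (x^2 + y^2) ≠ 0 := (Real.sqrt_pos.mpr hx2y2).ne'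
    refine ⟨((x^2 + y^2)/2, Real.arctan (y/x) - π/4), ⟨?_, ?_, ?_⟩, ?_⟩
    · simpa using by positivity
    · simp only
      have h0 : Real.arctan 0 < Real.arctan (y/x) :=
        Real.arctan_strictMono (div_pos hy hx)
      rw [Real.arctan_zero] at h0
      linarith
    · simp only
      have := Real.arctan_lt_pi_div_two (y/x)
      linarith
    · simp only [Fmap, hsq2, sub_add_cancel]
      have hc : Real.cos (Real.arctan (y/x)) = x / Real.sqrt (x^2 + y^2) := by
        rw [Real.cos_arctan, h1p]
        rw [one_div, inv_div]
      have hs : Real.sin (Real.arctan (y/x)) = y / Real.sqrt (x^2 + y^2) := by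
        rw [Real.sin_arctan, h1p]
        rw [div_div_div_eq]
        rw [div_eq_div_iff (by positivity) (by positivity)]
        ring
      rw [hc, hs]
      simp only [Prod.mk.injEq]
      constructor <;> field_simp

/-- Auxiliary: product of two `withDensity` measures on `ℝ` is a `withDensity`
of the 2-dimensional volume. -/
lemma prod_withDensity {f g : ℝ → ℝ≥0∞} (hf : Measurable f) (hg : Measurable g)
    [SigmaFinite (volume.withDensity f)] [SigmaFinite (volume.withDensity g)] :
    ((volume.withDensity f).prod (volume.withDensity g)) =
      (volume : Measure (ℝ × ℝ)).withDensity (fun p => f p.1 * g p.2) := by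
  refine Measure.prod_eq fun s t hs ht => ?_
  rw [withDensity_apply _ (hs.prod ht), Measure.volume_eq_prod, ← Measure.prod_restrict,
    lintegral_prod_mul hf.aemeasurable hg.aemeasurable,
    withDensity_apply _ hs, withDensity_apply _ ht]

noncomputable def uD : ℝ → ℝ≥0∞ :=
  (Set.Ioo (-(π/4)) (π/4)).indicator fun _ => ENNReal.ofReal (2/π)

lemma uD_measurable : Measurable uD := measurable_const.indicator measurableSet_Ioo

lemma unifOn_eq : unifOn (-(π/4)) (π/4) = volume.withDensity uD := by
  rw [unifOn, uD, withDensity_indicator measurableSet_Ioo, withDensity_const]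
  congr 1
  rw [show π/4 - -(π/4) = π/2 by ring, ← ENNReal.ofReal_inv_of_pos (by positivity), inv_div]

lemma expMeasure_eq : expMeasure 1 = volume.withDensity (gammaPDF 1 1) := rfl

lemma gammaPDF_measurable : Measurable (gammaPDF 1 1) :=
  ENNReal.measurable_ofReal.comp (measurable_gammaPDFReal 1 1)

noncomputable def rho0 : ℝ × ℝ → ℝ≥0∞ := fun p => ENNReal.ofReal (2/π * Real.exp (-p.1))

noncomputable def Dq : ℝ × ℝ → ℝ≥0∞ := fun p =>
  ENNReal.ofReal (2/π * Real.exp (-(p.1^2 + p.2^2)/2))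

lemma src_ae :
    (fun p : ℝ × ℝ => gammaPDF 1 1 p.1 * uD p.2) =ᵐ[volume] Sset.indicator rho0 := by
  have hL : (volume : Measure (ℝ × ℝ)) {p : ℝ × ℝ | p.1 = 0} = 0 := by
    have : {p : ℝ × ℝ | p.1 = 0} = ({0} : Set ℝ) ×ˢ (Set.univ : Set ℝ) := by
      ext ⟨x, y⟩; simp [Set.mem_prod, eq_comm]
    rw [this, Measure.volume_eq_prod, Measure.prod_prod, Real.volume_singleton, zero_mul]
  have hae : ∀ᵐ p : ℝ × ℝ, p.1 ≠ 0 := by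
    rw [ae_iff]
    have h' : {p : ℝ × ℝ | ¬ p.1 ≠ 0} = {p : ℝ × ℝ | p.1 = 0} := by ext p; simp
    rw [h']; exact hL
  filter_upwards [hae] with p hp
  rcases lt_or_gt_of_ne hp with h | h
  · rw [gammaPDF_of_neg h, zero_mul, Set.indicator_of_notMem]
    intro hmem
    exact absurd hmem.1 (not_lt.mpr h.le)
  · have hgam : gammaPDF 1 1 p.1 = ENNReal.ofReal (Real.exp (-p.1)) := by
      rw [gammaPDF_eq, if_pos h.le]
      congr 1
      rw [Real.Gamma_one, Real.one_rpow, show (1:ℝ) - 1 = 0 by ring, Real.rpow_zero]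
      norm_num
    by_cases h2 : p.2 ∈ Set.Ioo (-(π/4)) (π/4)
    · rw [hgam, uD, Set.indicator_of_mem h2, Set.indicator_of_mem (show p ∈ Sset from ⟨h, h2⟩),
        ← ENNReal.ofReal_mul (Real.exp_pos _).le]
      rw [rho0]
      congr 1
      ring
    · rw [uD, Set.indicator_of_notMem h2, mul_zero, Set.indicator_of_notMem]
      intro hmem
      exact h2 hmem.2

lemma tgt_eq (p : ℝ × ℝ) :
    hnPDF p.1 * hnPDF p.2 = (Set.Ioi (0:ℝ) ×ˢ Set.Ioi (0:ℝ)).indicator Dq p := by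
  by_cases h1 : p.1 ∈ Set.Ioi (0:ℝ)
  · by_cases h2 : p.2 ∈ Set.Ioi (0:ℝ)
    · rw [hnPDF, hnPDF, Set.indicator_of_mem h1, Set.indicator_of_mem h2,
        Set.indicator_of_mem (Set.mem_prod.mpr ⟨h1, h2⟩), ← ENNReal.ofReal_mul (by positivity)]
      rw [Dq]
      congr 1
      have hπ : (0:ℝ) ≤ 2/π := by positivity
      calc Real.sqrt (2/π) * Real.exp (-p.1^2/2) * (Real.sqrt (2/π) * Real.exp (-p.2^2/2))
          = (Real.sqrt (2/π) * Real.sqrt (2/π))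
            * (Real.exp (-p.1^2/2) * Real.exp (-p.2^2/2)) := by ring
        _ = 2/π * Real.exp (-(p.1^2 + p.2^2)/2) := by
            rw [Real.mul_self_sqrt hπ, ← Real.exp_add]
            congr 1
            ring
    · rw [hnPDF, hnPDF, Set.indicator_of_notMem h2, ENNReal.ofReal_zero, mul_zero,
        Set.indicator_of_notMem]
      intro hmem; exact h2 hmem.2
  · rw [hnPDF, Set.indicator_of_notMem h1, ENNReal.ofReal_zero, zero_mul,
      Set.indicator_of_notMem]
    intro hmem; exact h1 hmem.1

/-- Core change-of-variables fact: the pushforward of `Exp(1) ⊗ U(−π/4, π/4)` under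
`Fmap` is the product of two half-normal distributions. -/
lemma map_Fmap :
    Measure.map Fmap ((expMeasure 1).prod (unifOn (-(π/4)) (π/4))) =
      hnMeasure.prod hnMeasure := by
  haveI hsf1 : SigmaFinite (volume.withDensity uD) := by
    rw [← unifOn_eq]
    haveI := isProbability_unifOn
    infer_instance
  haveI hsf2 : SigmaFinite (volume.withDensity hnPDF) :=
    SigmaFinite.withDensity_ofReal _
  have hQmeas : MeasurableSet (Set.Ioi (0:ℝ) ×ˢ Set.Ioi (0:ℝ)) :=
    measurableSet_Ioi.prod measurableSet_Ioi
  haveI hsf3 : SigmaFinite (volume.withDensity (gammaPDF 1 1)) := by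
    rw [← expMeasure_eq]
    haveI := isProbabilityMeasure_expMeasure one_pos
    infer_instance
  show Measure.map Fmap ((expMeasure 1).prod (unifOn (-(π/4)) (π/4)))
      = (volume.withDensity hnPDF).prod (volume.withDensity hnPDF)
  rw [expMeasure_eq, unifOn_eq, prod_withDensity gammaPDF_measurable uD_measurable,
    prod_withDensity hnPDF_measurable hnPDF_measurable]
  refine Measure.ext fun A hA => ?_
  have hpre : MeasurableSet (Fmap ⁻¹' A) := Fmap_measurable hA
  rw [Measure.map_apply Fmap_measurable hA, withDensity_apply _ hpre, withDensity_apply _ hA]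
  have L1 : ∫⁻ p in Fmap ⁻¹' A, gammaPDF 1 1 p.1 * uD p.2 ∂volume
      = ∫⁻ p in Fmap ⁻¹' A, Sset.indicator rho0 p ∂volume :=
    lintegral_congr_ae (ae_restrict_of_ae src_ae)
  have L2 : ∫⁻ p in Fmap ⁻¹' A, Sset.indicator rho0 p ∂volume
      = ∫⁻ p in Sset ∩ Fmap ⁻¹' A, rho0 p ∂volume := by
    rw [lintegral_indicator Sset_measurable, Measure.restrict_restrict Sset_measurable]
  have R1 : ∫⁻ p in A, hnPDF p.1 * hnPDF p.2 ∂volume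
      = ∫⁻ p in A, (Set.Ioi (0:ℝ) ×ˢ Set.Ioi (0:ℝ)).indicator Dq p ∂volume :=
    lintegral_congr fun p => tgt_eq p
  have R2 : ∫⁻ p in A, (Set.Ioi (0:ℝ) ×ˢ Set.Ioi (0:ℝ)).indicator Dq p ∂volume
      = ∫⁻ p in (Set.Ioi (0:ℝ) ×ˢ Set.Ioi (0:ℝ)) ∩ A, Dq p ∂volume := by
    rw [lintegral_indicator hQmeas, Measure.restrict_restrict hQmeas]
  have R3 : ∫⁻ p in (Set.Ioi (0:ℝ) ×ˢ Set.Ioi (0:ℝ)) ∩ A, Dq p ∂volume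
      = ∫⁻ p in (Set.Ioi (0:ℝ) ×ˢ Set.Ioi (0:ℝ)), A.indicator Dq p ∂volume := by
    rw [lintegral_indicator hA, Measure.restrict_restrict hA, Set.inter_comm]
  have R4 : ∫⁻ p in (Set.Ioi (0:ℝ) ×ˢ Set.Ioi (0:ℝ)), A.indicator Dq p ∂volume
      = ∫⁻ p in Fmap '' Sset, A.indicator Dq p ∂volume := by rw [Fmap_image]
  have R5 : ∫⁻ p in Fmap '' Sset, A.indicator Dq p ∂volume
      = ∫⁻ p in Sset, ENNReal.ofReal |(Fderiv p).det| * (A.indicator Dq) (Fmap p) ∂volume :=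
    lintegral_image_eq_lintegral_abs_det_fderiv_mul volume Sset_measurable
      (fun p hp => (hasFDerivAt_Fmap hp.1).hasFDerivWithinAt) Fmap_injOn _
  have R6 : ∫⁻ p in Sset, ENNReal.ofReal |(Fderiv p).det| * (A.indicator Dq) (Fmap p) ∂volume
      = ∫⁻ p in Sset, (Fmap ⁻¹' A).indicator rho0 p ∂volume := by
    apply setLIntegral_congr_fun Sset_measurable
    intro p hp
    beta_reduce
    rw [det_Fderiv hp.1, abs_one, ENNReal.ofReal_one, one_mul]
    have hDqF : Dq (Fmap p) = rho0 p := by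
      have h0 : (0:ℝ) ≤ 2 * p.1 := by
        have : (0:ℝ) < p.1 := hp.1
        linarith
      have hkey : (Real.sqrt (2 * p.1) * Real.cos (p.2 + π/4))^2
          + (Real.sqrt (2 * p.1) * Real.sin (p.2 + π/4))^2 = 2 * p.1 := by
        rw [mul_pow, mul_pow, ← mul_add, Real.cos_sq_add_sin_sq, Real.sq_sqrt h0]
        ring
      rw [Dq, rho0]
      simp only [Fmap]
      rw [hkey, show -(2 * p.1)/2 = -p.1 by ring]
    by_cases hmem : Fmap p ∈ A
    · rw [Set.indicator_of_mem hmem, Set.indicator_of_mem (by exact hmem), hDqF]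
    · rw [Set.indicator_of_notMem hmem, Set.indicator_of_notMem (by exact hmem)]
  have R7 : ∫⁻ p in Sset, (Fmap ⁻¹' A).indicator rho0 p ∂volume
      = ∫⁻ p in Fmap ⁻¹' A ∩ Sset, rho0 p ∂volume := by
    rw [lintegral_indicator hpre, Measure.restrict_restrict hpre]
  rw [L1, L2, R1, R2, R3, R4, R5, R6, R7, Set.inter_comm]

lemma isProbability_hnMeasure : IsProbabilityMeasure hnMeasure := by
  haveI : IsProbabilityMeasure (unifOn (-(π/4)) (π/4)) := isProbability_unifOn
  haveI : IsProbabilityMeasure (expMeasure 1) := isProbabilityMeasure_expMeasure one_pos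
  have huniv : (hnMeasure.prod hnMeasure) Set.univ = 1 := by
    rw [← map_Fmap, Measure.map_apply Fmap_measurable MeasurableSet.univ]
    simp [measure_univ]
  rw [← Set.univ_prod_univ, Measure.prod_prod] at huniv
  constructor
  rcases le_total (hnMeasure Set.univ) 1 with hx | hx
  · refine le_antisymm hx ?_
    calc (1:ℝ≥0∞) = hnMeasure Set.univ * hnMeasure Set.univ := huniv.symm
      _ ≤ 1 * hnMeasure Set.univ := mul_le_mul_left hx _
      _ = hnMeasure Set.univ := one_mul _
  · refine le_antisymm ?_ hx
    calc hnMeasure Set.univ = hnMeasure Set.univ * 1 := (mul_one _).symm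
      _ ≤ hnMeasure Set.univ * hnMeasure Set.univ := mul_le_mul_right hx _
      _ = 1 := huniv

end SEP1

open SEP1 Set in
/-- Exact SEP formula for the QPSK-modulated 2-bit phase-quantized SIMO-MRC system. -/
theorem stmt1
    {Ω : Type*} [MeasurableSpace Ω] (P : Measure Ω) [IsProbabilityMeasure P]
    (N : ℕ) (hN : 1 ≤ N)
    (W θ : Fin N → Ω → ℝ)
    (hWmeas : ∀ i, Measurable (W i)) (hθmeas : ∀ i, Measurable (θ i))
    (hWlaw : ∀ i, Measure.map (W i) P = expMeasure 1)
    (hθlaw : ∀ i, Measure.map (θ i) P = unifOn (-(π / 4)) (π / 4))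
    (hindep : iIndepFun (Sum.elim W θ) P)
    (T Tt : Ω → ℝ)
    (hT : T = fun ω => (Real.sqrt N)⁻¹ * ∑ i, Real.sqrt (2 * W i ω) * Real.cos (θ i ω + π / 4))
    (hTt : Tt = fun ω => (Real.sqrt N)⁻¹ * ∑ i, Real.sqrt (2 * W i ω) * Real.sin (θ i ω + π / 4))
    (ρ : ℝ) (hρ : 0 < ρ) :
    1 - ∫ ω, (1 - gaussQ (Real.sqrt ρ * T ω)) * (1 - gaussQ (Real.sqrt ρ * Tt ω)) ∂P
      = 2 * (∫ ω, gaussQ (Real.sqrt ρ * T ω) ∂P)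
        - (∫ ω, gaussQ (Real.sqrt ρ * T ω) ∂P) ^ 2 := by
  haveI : IsProbabilityMeasure (unifOn (-(π/4)) (π/4)) := isProbability_unifOn
  haveI : IsProbabilityMeasure (expMeasure 1) := isProbabilityMeasure_expMeasure one_pos
  haveI : IsProbabilityMeasure hnMeasure := isProbability_hnMeasure
  -- notation
  set ι : Type := Fin N ⊕ Fin N with hι
  set ν : ι → Measure ℝ := Sum.elim (fun _ => expMeasure 1) (fun _ => unifOn (-(π/4)) (π/4))
    with hν
  have hνprob : ∀ j, IsProbabilityMeasure (ν j) := by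
    rintro (i | i) <;> simp only [hν, Sum.elim_inl, Sum.elim_inr] <;> infer_instance
  haveI : ∀ j, SigmaFinite (ν j) := fun j => haveI := hνprob j; inferInstance
  set X : ι → Ω → ℝ := Sum.elim W θ with hX
  have hXmeas : ∀ j, Measurable (X j) := by rintro (i | i); exacts [hWmeas i, hθmeas i]
  have hXvec : Measurable (fun ω (j : ι) => X j ω) :=
    measurable_pi_iff.mpr fun j => hXmeas j
  -- step 1 : the joint law of the 2N variables is the product measure
  have h1 : Measure.map (fun ω (j : ι) => X j ω) P = Measure.pi ν := by
    refine (Measure.pi_eq fun s hs => ?_).symm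
    rw [Measure.map_apply hXvec (MeasurableSet.univ_pi hs)]
    have hpre : (fun ω (j : ι) => X j ω) ⁻¹' (Set.univ.pi s) = ⋂ j ∈ Finset.univ, X j ⁻¹' s j := by
      ext ω; simp [Set.mem_pi]
    rw [hpre, hindep.measure_inter_preimage_eq_mul Finset.univ (fun j _ => hs j)]
    refine Finset.prod_congr rfl fun j _ => ?_
    rw [← Measure.map_apply (hXmeas j) (hs j)]
    congr 1
    rcases j with i | i
    · exact hWlaw i
    · exact hθlaw i
  -- the sum map
  set g : (Fin N → ℝ) → ℝ := fun v => (Real.sqrt N)⁻¹ * ∑ i, v i with hg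
  have hgmeas : Measurable g := by fun_prop
  set m : Measure ℝ := Measure.map g (Measure.pi fun _ : Fin N => hnMeasure) with hm
  haveI : IsProbabilityMeasure m := Measure.isProbabilityMeasure_map hgmeas.aemeasurable
  -- the composite map
  set E1 := MeasurableEquiv.sumPiEquivProdPi (fun _ : ι => ℝ) with hE1
  set E2 := MeasurableEquiv.arrowProdEquivProdArrow ℝ ℝ (Fin N) with hE2
  set Φ : (ι → ℝ) → ℝ × ℝ := fun x =>
    Prod.map g g (E2 ((fun v => fun i => Fmap (v i)) (E2.symm (E1 x)))) with hΦ
  have hΦmeas : Measurable Φ := by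
    apply (hgmeas.prodMap hgmeas).comp
    apply E2.measurable.comp
    apply (measurable_pi_iff.mpr fun i => Fmap_measurable.comp (measurable_pi_apply i)).comp
    exact E2.symm.measurable.comp E1.measurable
  -- identification of (T, Tt) as Φ ∘ X
  have hTT : (fun ω => (T ω, Tt ω)) = Φ ∘ (fun ω (j : ι) => X j ω) := by
    funext ω
    rw [hT, hTt]
    rfl
  -- law of (T, Tt)
  have h2 : Measure.map (fun ω => (T ω, Tt ω)) P = m.prod m := by
    have m1 : MeasurePreserving (⇑E1) (Measure.pi ν)
        ((Measure.pi fun _ : Fin N => expMeasure 1).prod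
          (Measure.pi fun _ : Fin N => unifOn (-(π/4)) (π/4))) :=
      MeasureTheory.measurePreserving_sumPiEquivProdPi ν
    have m2 : MeasurePreserving (⇑E2.symm)
        ((Measure.pi fun _ : Fin N => expMeasure 1).prod
          (Measure.pi fun _ : Fin N => unifOn (-(π/4)) (π/4)))
        (Measure.pi fun _ : Fin N => (expMeasure 1).prod (unifOn (-(π/4)) (π/4))) :=
      (MeasureTheory.measurePreserving_arrowProdEquivProdArrow ℝ ℝ (Fin N)
        (fun _ => expMeasure 1) (fun _ => unifOn (-(π/4)) (π/4))).symm E2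
    have m3 : MeasurePreserving (fun (v : Fin N → ℝ × ℝ) (i : Fin N) => Fmap (v i))
        (Measure.pi fun _ : Fin N => (expMeasure 1).prod (unifOn (-(π/4)) (π/4)))
        (Measure.pi fun _ : Fin N => hnMeasure.prod hnMeasure) :=
      MeasureTheory.measurePreserving_pi _ _ (fun _ => ⟨Fmap_measurable, map_Fmap⟩)
    have m4 : MeasurePreserving (⇑E2)
        (Measure.pi fun _ : Fin N => hnMeasure.prod hnMeasure)
        ((Measure.pi fun _ : Fin N => hnMeasure).prod
          (Measure.pi fun _ : Fin N => hnMeasure)) :=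
      MeasureTheory.measurePreserving_arrowProdEquivProdArrow ℝ ℝ (Fin N)
        (fun _ => hnMeasure) (fun _ => hnMeasure)
    have m5 : MeasurePreserving (Prod.map g g)
        ((Measure.pi fun _ : Fin N => hnMeasure).prod
          (Measure.pi fun _ : Fin N => hnMeasure)) (m.prod m) :=
      ⟨hgmeas.prodMap hgmeas, (Measure.map_prod_map _ _ hgmeas hgmeas).symm⟩
    have hmp : MeasurePreserving Φ (Measure.pi ν) (m.prod m) :=
      (((m5.comp m4).comp m3).comp m2).comp m1
    rw [hTT, ← Measure.map_map hΦmeas hXvec, h1]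
    exact hmp.map_eq
  -- the function q
  set q : ℝ → ℝ := fun x => gaussQ (Real.sqrt ρ * x) with hq
  have hqmeas : Measurable q := gaussQ_measurable.comp (measurable_const_mul _)
  have hq0 : ∀ x, 0 ≤ q x := fun x => gaussQ_nonneg _
  have hq1 : ∀ x, q x ≤ 1 := fun x => gaussQ_le_one _
  have hTmeas : Measurable T := by
    rw [hT]; fun_prop
  have hTtmeas : Measurable Tt := by
    rw [hTt]; fun_prop
  -- integrability
  have hint : ∀ (f : Ω → ℝ), Measurable f → (∀ ω, 0 ≤ f ω) → (∀ ω, f ω ≤ 1) → Integrable f P := by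
    intro f hf h0 h1
    refine (integrable_const (1:ℝ)).mono' hf.aestronglyMeasurable ?_
    filter_upwards with ω
    rw [Real.norm_eq_abs, abs_of_nonneg (h0 ω)]; exact h1 ω
  have hiT : Integrable (fun ω => q (T ω)) P :=
    hint _ (hqmeas.comp hTmeas) (fun ω => hq0 _) (fun ω => hq1 _)
  have hiTt : Integrable (fun ω => q (Tt ω)) P :=
    hint _ (hqmeas.comp hTtmeas) (fun ω => hq0 _) (fun ω => hq1 _)
  have hiTT : Integrable (fun ω => q (T ω) * q (Tt ω)) P :=
    hint _ ((hqmeas.comp hTmeas).mul (hqmeas.comp hTtmeas))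
      (fun ω => mul_nonneg (hq0 _) (hq0 _))
      (fun ω => mul_le_one₀ (hq1 _) (hq0 _) (hq1 _))
  -- the three integral identities
  have key : ∀ (f : ℝ × ℝ → ℝ), Measurable f →
      ∫ ω, f (T ω, Tt ω) ∂P = ∫ p, f p ∂(m.prod m) := by
    intro f hf
    rw [← h2, integral_map (hTmeas.prodMk hTtmeas).aemeasurable hf.aestronglyMeasurable]
  have e1 : ∫ ω, q (T ω) * 1 ∂P = (∫ x, q x ∂m) * ∫ _, (1:ℝ) ∂m :=
    (key (fun p => q p.1 * 1) (by fun_prop)).trans (integral_prod_mul q (fun _ => 1))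
  have e2 : ∫ ω, 1 * q (Tt ω) ∂P = (∫ _, (1:ℝ) ∂m) * ∫ x, q x ∂m :=
    (key (fun p => 1 * q p.2) (by fun_prop)).trans (integral_prod_mul (fun _ => 1) q)
  have e12 : ∫ ω, q (T ω) * q (Tt ω) ∂P = (∫ x, q x ∂m) * ∫ x, q x ∂m :=
    (key (fun p => q p.1 * q p.2) (by fun_prop)).trans (integral_prod_mul q q)
  simp only [mul_one, one_mul, integral_const, measure_univ, ENNReal.toReal_one,
    smul_eq_mul, probReal_univ] at e1 e2
  have hI2 : ∫ ω, q (Tt ω) ∂P = ∫ ω, q (T ω) ∂P := by rw [e1, e2]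
  have hI12 : ∫ ω, q (T ω) * q (Tt ω) ∂P = (∫ ω, q (T ω) ∂P) * (∫ ω, q (Tt ω) ∂P) := by
    rw [e1, e2, e12]
  -- final algebra
  have expand : ∫ ω, (1 - q (T ω)) * (1 - q (Tt ω)) ∂P
      = 1 - (∫ ω, q (T ω) ∂P) - (∫ ω, q (Tt ω) ∂P) + ∫ ω, q (T ω) * q (Tt ω) ∂P := by
    have : (fun ω => (1 - q (T ω)) * (1 - q (Tt ω)))
        = fun ω => 1 - q (T ω) - q (Tt ω) + q (T ω) * q (Tt ω) := by
      funext ω; ring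
    rw [this]
    have i1 : Integrable (fun ω => 1 - q (T ω)) P := (integrable_const 1).sub hiT
    have i2 : Integrable (fun ω => 1 - q (T ω) - q (Tt ω)) P := i1.sub hiTt
    rw [integral_add i2 hiTT, integral_sub i1 hiTt, integral_sub (integrable_const 1) hiT]
    simp [measure_univ]
  show 1 - ∫ ω, (1 - q (T ω)) * (1 - q (Tt ω)) ∂P
      = 2 * (∫ ω, q (T ω) ∂P) - (∫ ω, q (T ω) ∂P) ^ 2
  rw [expand, hI12, hI2]
  ring
end

section
/- Let N ≥ 1 and let W_1,…,W_N be i.i.d. Exp(1) random variables and θ_1,…,θ_N be i.i.d. U(−π/2, π/2) random variables, with all 2N variables mutually independent. Define Z_i = √(2 W_i) · cos(θ_i + π/4), Z̃_i = √(2 W_i) · sin(θ_i + π/4), T = N^{−1/2} Σ_{i=1}^N Z_i and T̃ = N^{−1/2} Σ_{i=1}^N Z̃_i. Then for every ρ > 0, 1 − E[(1 − Q(√ρ · T))·(1 − Q(√ρ · T̃))] ≥ 2^{−1−2N}. (Error floor of the QPSK-modulated 1-bit phase-quantized SIMO-MRC system, implying zero diversity gain.) -/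
open MeasureTheory ProbabilityTheory Real

lemma gaussInt : Integrable (fun t : ℝ => Real.exp (-t ^ 2 / 2)) := by
  have h := integrable_exp_neg_mul_sq (b := 1/2) (by norm_num)
  convert h using 2 with t
  ring_nf

lemma gaussQ_nonneg (x : ℝ) : 0 ≤ gaussQ x := by
  unfold gaussQ; positivity

lemma gaussQ_le_one (x : ℝ) : gaussQ x ≤ 1 := by
  unfold gaussQ
  rw [inv_mul_le_iff₀ (by positivity), mul_one]
  have h := integral_gaussian (1/2)
  have h2 : ∫ t : ℝ, Real.exp (-t ^ 2 / 2) = Real.sqrt (2 * π) := by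
    rw [show (2:ℝ) * π = π / (1/2) by ring, ← h]
    congr 1 with t; ring_nf
  rw [← h2]
  exact setIntegral_le_integral gaussInt (Filter.Eventually.of_forall fun t => (exp_pos _).le)

lemma gaussQ_anti : Antitone gaussQ := by
  intro x y hxy
  unfold gaussQ
  have h := setIntegral_mono_set (s := Set.Ioi y) (t := Set.Ioi x) gaussInt.integrableOn
    (Filter.Eventually.of_forall fun t => (exp_pos _).le)
    (HasSubset.Subset.eventuallyLE (Set.Ioi_subset_Ioi hxy))
  exact mul_le_mul_of_nonneg_left h (by positivity)

lemma gaussQ_half (x : ℝ) (hx : x ≤ 0) : (1 : ℝ)/2 ≤ gaussQ x := by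
  have h0 : gaussQ 0 = 1/2 := by
    unfold gaussQ
    have h := integral_gaussian_Ioi (1/2)
    have h2 : ∫ t in Set.Ioi (0:ℝ), Real.exp (-t ^ 2 / 2) = Real.sqrt (2 * π) / 2 := by
      rw [show (2:ℝ) * π = π / (1/2) by ring, ← h]
      congr 1 with t; ring_nf
    rw [h2]
    field_simp
  rw [← h0]
  exact gaussQ_anti hx

/-- Error floor `2^{-1-2N}` of the QPSK-modulated 1-bit phase-quantized SIMO-MRC system. -/
theorem stmt3
    {Ω : Type*} [MeasurableSpace Ω] (P : Measure Ω) [IsProbabilityMeasure P]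
    (N : ℕ) (hN : 1 ≤ N)
    (W θ : Fin N → Ω → ℝ)
    (hWmeas : ∀ i, Measurable (W i)) (hθmeas : ∀ i, Measurable (θ i))
    (hWlaw : ∀ i, Measure.map (W i) P = expMeasure 1)
    (hθlaw : ∀ i, Measure.map (θ i) P = unifOn (-(π / 2)) (π / 2))
    (hindep : iIndepFun (Sum.elim W θ) P)
    (T Tt : Ω → ℝ)
    (hT : T = fun ω => (Real.sqrt N)⁻¹ * ∑ i, Real.sqrt (2 * W i ω) * Real.cos (θ i ω + π / 4))
    (hTt : Tt = fun ω => (Real.sqrt N)⁻¹ * ∑ i, Real.sqrt (2 * W i ω) * Real.sin (θ i ω + π / 4))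
    (ρ : ℝ) (hρ : 0 < ρ) :
    1 - ∫ ω, (1 - gaussQ (Real.sqrt ρ * T ω)) * (1 - gaussQ (Real.sqrt ρ * Tt ω)) ∂P
      ≥ ((2 : ℝ) ^ (1 + 2 * N))⁻¹ := by
  -- measurability
  have hTmeas : Measurable T := by
    rw [hT]
    exact (measurable_const.mul (Finset.measurable_sum _ (fun i _ =>
      ((measurable_const.mul (hWmeas i)).sqrt.mul ((hθmeas i).add_const _).cos))))
  have hTtmeas : Measurable Tt := by
    rw [hTt]
    exact (measurable_const.mul (Finset.measurable_sum _ (fun i _ =>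
      ((measurable_const.mul (hWmeas i)).sqrt.mul ((hθmeas i).add_const _).sin))))
  have hQmeas : Measurable gaussQ := gaussQ_anti.measurable
  set g : Ω → ℝ := fun ω => gaussQ (Real.sqrt ρ * T ω) with hg
  set g2 : Ω → ℝ := fun ω => gaussQ (Real.sqrt ρ * Tt ω) with hg2
  have hgmeas : Measurable g := hQmeas.comp (measurable_const.mul hTmeas)
  have hg2meas : Measurable g2 := hQmeas.comp (measurable_const.mul hTtmeas)
  have hg_int : Integrable g P := by
    apply (integrable_const (1:ℝ)).mono' hgmeas.aestronglyMeasurable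
    refine Filter.Eventually.of_forall fun ω => ?_
    rw [Real.norm_eq_abs, abs_of_nonneg (gaussQ_nonneg _)]
    exact gaussQ_le_one _
  have hf_int : Integrable (fun ω => (1 - g ω) * (1 - g2 ω)) P := by
    apply (integrable_const (1:ℝ)).mono'
      ((measurable_const.sub hgmeas).mul (measurable_const.sub hg2meas)).aestronglyMeasurable
    refine Filter.Eventually.of_forall fun ω => ?_
    have h1 := gaussQ_nonneg (Real.sqrt ρ * T ω); have h2 := gaussQ_le_one (Real.sqrt ρ * T ω)
    have h3 := gaussQ_nonneg (Real.sqrt ρ * Tt ω); have h4 := gaussQ_le_one (Real.sqrt ρ * Tt ω)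
    show ‖(1 - gaussQ (Real.sqrt ρ * T ω)) * (1 - gaussQ (Real.sqrt ρ * Tt ω))‖ ≤ 1
    rw [Real.norm_eq_abs, abs_of_nonneg (by nlinarith)]
    nlinarith
  -- the event A
  set A : Set Ω := ⋂ i, θ i ⁻¹' Set.Ico (π/4) (π/2) with hA
  have hA_meas : MeasurableSet A :=
    MeasurableSet.iInter fun i => (hθmeas i) measurableSet_Ico
  -- probability of A
  have hPA : P A = (4 : ENNReal)⁻¹ ^ N := by
    have key := hindep.measure_inter_preimage_eq_mul (Finset.univ)
      (sets := Sum.elim (fun _ => Set.univ) (fun _ => Set.Ico (π/4) (π/2)))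
      (fun i _ => by cases i <;> simp [measurableSet_Ico])
    have hInter : (⋂ i ∈ Finset.univ, Sum.elim W θ i ⁻¹'
        Sum.elim (fun _ => Set.univ) (fun _ => Set.Ico (π/4) (π/2)) i) = A := by
      simp only [Finset.mem_univ, Set.iInter_true]
      rw [Set.iInter_sum]
      simp [hA]
    rw [hInter] at key
    rw [key, Fintype.prod_sum_type]
    have h1 : ∀ i : Fin N, P (W i ⁻¹' Set.univ) = 1 := fun i => by simp
    have h2 : ∀ i : Fin N, P (θ i ⁻¹' Set.Ico (π/4) (π/2)) = (4 : ENNReal)⁻¹ := by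
      intro i
      have hm : P (θ i ⁻¹' Set.Ico (π/4) (π/2)) =
          Measure.map (θ i) P (Set.Ico (π/4) (π/2)) := by
        rw [Measure.map_apply (hθmeas i) measurableSet_Ico]
      rw [hm, hθlaw i]
      unfold unifOn
      rw [Measure.smul_apply, Measure.restrict_apply measurableSet_Ico]
      have hss : Set.Ico (π/4) (π/2) ∩ Set.Ioo (-(π/2)) (π/2) = Set.Ico (π/4) (π/2) := by
        apply Set.inter_eq_self_of_subset_left
        intro x hx
        constructor
        · linarith [hx.1, pi_pos]
        · exact hx.2
      rw [hss, Real.volume_Ico]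
      have : π / 2 - -(π/2) = π := by ring
      rw [this]
      have hπ : (0:ℝ) < π := pi_pos
      have h4 : π / 2 - π / 4 = π / 4 := by ring
      rw [h4, smul_eq_mul, show (π/4 : ℝ) = π * (1/4) by ring,
        ENNReal.ofReal_mul hπ.le, ← mul_assoc,
        ENNReal.inv_mul_cancel (by simp [hπ]) ENNReal.ofReal_ne_top, one_mul]
      rw [show ((1:ℝ)/4) = (4:ℝ)⁻¹ by norm_num, ENNReal.ofReal_inv_of_pos (by norm_num)]
      norm_num
    simp only [Sum.elim_inl, Sum.elim_inr, h1, h2, Finset.prod_const_one, one_mul,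
      Finset.prod_const, Finset.card_univ, Fintype.card_fin]
  -- on A, T ≤ 0
  have hTA : ∀ ω ∈ A, Real.sqrt ρ * T ω ≤ 0 := by
    intro ω hω
    apply mul_nonpos_of_nonneg_of_nonpos (Real.sqrt_nonneg _)
    rw [hT]
    apply mul_nonpos_of_nonneg_of_nonpos (by positivity)
    apply Finset.sum_nonpos
    intro i _
    apply mul_nonpos_of_nonneg_of_nonpos (Real.sqrt_nonneg _)
    have hθi : θ i ω ∈ Set.Ico (π/4) (π/2) := by
      have := Set.mem_iInter.1 hω i
      exact this
    apply Real.cos_nonpos_of_pi_div_two_le_of_le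
    · linarith [hθi.1]
    · linarith [hθi.2, pi_pos]
  -- chain of inequalities
  have step1 : 1 - ∫ ω, (1 - g ω) * (1 - g2 ω) ∂P = ∫ ω, (1 - (1 - g ω) * (1 - g2 ω)) ∂P := by
    rw [integral_sub (integrable_const 1) hf_int, integral_const, probReal_univ,
      one_smul]
  have step2 : ∫ ω, g ω ∂P ≤ ∫ ω, (1 - (1 - g ω) * (1 - g2 ω)) ∂P := by
    apply integral_mono hg_int ((integrable_const (1:ℝ)).sub hf_int)
    intro ω
    have h2 := gaussQ_le_one (Real.sqrt ρ * T ω)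
    have h3 := gaussQ_nonneg (Real.sqrt ρ * Tt ω)
    simp only [hg, hg2, Pi.sub_apply]
    nlinarith
  have step3 : ∫ ω in A, g ω ∂P ≤ ∫ ω, g ω ∂P :=
    setIntegral_le_integral hg_int (Filter.Eventually.of_forall fun ω => gaussQ_nonneg _)
  have step4 : (1/2 : ℝ) * (P A).toReal ≤ ∫ ω in A, g ω ∂P := by
    apply setIntegral_ge_of_const_le_real hA_meas (measure_ne_top P A)
    · intro ω hω
      exact gaussQ_half _ (hTA ω hω)
    · exact hg_int.integrableOn
  have hPAr : (P A).toReal = (4 : ℝ)⁻¹ ^ N := by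
    rw [hPA, ENNReal.toReal_pow, ENNReal.toReal_inv]
    norm_num
  have hfinal : ((2:ℝ) ^ (1 + 2 * N))⁻¹ = (1/2 : ℝ) * (4 : ℝ)⁻¹ ^ N := by
    rw [pow_add, pow_mul, pow_one, mul_inv, inv_pow]
    norm_num
  rw [ge_iff_le, hfinal, step1]
  calc (1/2 : ℝ) * (4 : ℝ)⁻¹ ^ N = (1/2 : ℝ) * (P A).toReal := by rw [hPAr]
    _ ≤ ∫ ω in A, g ω ∂P := step4
    _ ≤ ∫ ω, g ω ∂P := step3
    _ ≤ _ := step2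
end

section
/- Let W be an Exp(1) random variable and θ an independent U(−π/4, π/4) random variable. Then the random variables X = W·(1 − sin 2θ) and Y = W·(1 + sin 2θ) are independent, and each of X and Y has the distribution of G² for a standard real Gaussian G (i.e., the chi-square distribution with one degree of freedom, equivalently the gamma distribution with shape 1/2 and rate 1/2). (Forward direction of Lemma 1: for 2-bit phase quantization, Z_i² and Z̃_i² are i.i.d.) -/
open MeasureTheory ProbabilityTheory Real Set
open scoped ENNReal

noncomputable def chiPDF (x : ℝ) : ℝ≥0∞ :=
  ENNReal.ofReal (if 0 < x then (Real.sqrt (2 * π * x))⁻¹ * Real.exp (-x / 2) else 0)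

lemma measurable_chiPDF : Measurable chiPDF := by
  apply Measurable.ennreal_ofReal
  apply Measurable.ite measurableSet_Ioi
  · exact (((measurable_const.mul measurable_id).sqrt).inv).mul
      ((measurable_id.neg.div_const 2).exp)
  · exact measurable_const

lemma chiPDF_eq_zero {x : ℝ} (hx : x ≤ 0) : chiPDF x = 0 := by
  simp [chiPDF, if_neg (not_lt.mpr hx)]

lemma sq_image_Ioi : (fun x : ℝ => x ^ 2) '' Ioi 0 = Ioi 0 := by
  ext y
  constructor
  · rintro ⟨x, hx, rfl⟩
    exact pow_pos (mem_Ioi.mp hx) 2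
  · intro hy
    exact ⟨Real.sqrt y, Real.sqrt_pos.mpr hy, Real.sq_sqrt hy.le⟩

lemma sq_image_Iio : (fun x : ℝ => x ^ 2) '' Iio 0 = Ioi 0 := by
  ext y
  constructor
  · rintro ⟨x, hx, rfl⟩
    have hx' : x ≠ 0 := ne_of_lt hx
    show (0:ℝ) < x ^ 2
    positivity
  · intro hy
    exact ⟨-Real.sqrt y, neg_lt_zero.mpr (Real.sqrt_pos.mpr hy),
      by simp [neg_sq, Real.sq_sqrt hy.le]⟩

lemma sq_injOn_Ioi : InjOn (fun x : ℝ => x ^ 2) (Ioi 0) := by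
  intro a ha b hb hab
  simp only [mem_Ioi] at ha hb
  simp only at hab
  nlinarith

lemma sq_injOn_Iio : InjOn (fun x : ℝ => x ^ 2) (Iio 0) := by
  intro a ha b hb hab
  simp only [mem_Iio] at ha hb
  simp only at hab
  nlinarith

lemma hasFDerivWithinAt_sq (s : Set ℝ) (x : ℝ) :
    HasFDerivWithinAt (fun x : ℝ => x ^ 2)
      ((1 : ℝ →L[ℝ] ℝ).smulRight (2 * x)) s x := by
  have h := (hasDerivAt_pow 2 x).hasDerivWithinAt (s := s)
  have h2 : (2 : ℕ) * x ^ (2 - 1) = 2 * x := by norm_num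
  rw [h2] at h
  exact h.hasFDerivWithinAt

lemma chi_cov (A : Set ℝ) (hA : MeasurableSet A) {s : Set ℝ} (hs : MeasurableSet s)
    (him : (fun x : ℝ => x ^ 2) '' s = Ioi 0) (hinj : InjOn (fun x : ℝ => x ^ 2) s) :
    ∫⁻ y in Ioi 0, A.indicator (fun _ => (1 : ℝ≥0∞)) y * chiPDF y
      = ∫⁻ x in s, ENNReal.ofReal |2 * x|
          * (A.indicator (fun _ => (1 : ℝ≥0∞)) (x ^ 2) * chiPDF (x ^ 2)) := by
  rw [← him]
  exact lintegral_image_eq_lintegral_abs_det_fderiv_mul volume hs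
    (fun x _ => hasFDerivWithinAt_sq s x) hinj _ |>.trans (by
      refine setLIntegral_congr_fun hs (fun x _ => ?_)
      rw [ContinuousLinearMap.smulRight_one_eq_toSpanSingleton, ContinuousLinearMap.det_toSpanSingleton])

lemma chi_pointwise {A : Set ℝ} {x : ℝ} (hx : x ≠ 0) :
    ENNReal.ofReal |2 * x|
        * (A.indicator (fun _ => (1 : ℝ≥0∞)) (x ^ 2) * chiPDF (x ^ 2))
      = 2 * ((fun g : ℝ => g ^ 2) ⁻¹' A).indicator (gaussianPDF 0 1) x := by
  have hx2 : (0 : ℝ) < x ^ 2 := by positivity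
  by_cases hmem : x ^ 2 ∈ A
  · have hmem' : x ∈ (fun g : ℝ => g ^ 2) ⁻¹' A := hmem
    rw [Set.indicator_of_mem hmem, Set.indicator_of_mem hmem', one_mul]
    rw [chiPDF, if_pos hx2, gaussianPDF, gaussianPDFReal]
    rw [← ENNReal.ofReal_mul (abs_nonneg _), ← ENNReal.ofReal_ofNat,
      ← ENNReal.ofReal_mul (by norm_num)]
    congr 1
    have hsq : Real.sqrt (2 * π * x ^ 2) = Real.sqrt (2 * π) * |x| := by
      rw [show (2 : ℝ) * π * x ^ 2 = (2 * π) * x ^ 2 by ring,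
        Real.sqrt_mul (by positivity), Real.sqrt_sq_eq_abs]
    rw [hsq]
    have habs : (0:ℝ) < |x| := abs_pos.mpr hx
    have hxx : |2 * x| = 2 * |x| := by rw [abs_mul]; norm_num
    rw [hxx]
    have : NNReal.toReal 1 = (1:ℝ) := rfl
    rw [this]
    rw [mul_inv]
    field_simp
    ring_nf
  · have hmem' : x ∉ (fun g : ℝ => g ^ 2) ⁻¹' A := hmem
    rw [Set.indicator_of_notMem hmem, Set.indicator_of_notMem hmem']
    simp

lemma chi_eq : Measure.map (fun g : ℝ => g ^ 2) (gaussianReal 0 1)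
    = (volume : Measure ℝ).withDensity chiPDF := by
  have hsq : Measurable fun g : ℝ => g ^ 2 := measurable_id.pow_const 2
  ext A hA
  rw [Measure.map_apply hsq hA, gaussianReal_of_var_ne_zero 0 one_ne_zero,
    withDensity_apply _ (hsq hA), withDensity_apply _ hA]
  set S : Set ℝ := (fun g : ℝ => g ^ 2) ⁻¹' A with hS
  have hSm : MeasurableSet S := hsq hA
  have hpdfm : Measurable (gaussianPDF 0 1) :=
    (measurable_gaussianPDFReal 0 1).ennreal_ofReal
  have hIoi : ∫⁻ y in Ioi 0, A.indicator (fun _ => (1 : ℝ≥0∞)) y * chiPDF y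
      = 2 * ∫⁻ x in Ioi 0, S.indicator (gaussianPDF 0 1) x := by
    rw [chi_cov A hA measurableSet_Ioi sq_image_Ioi sq_injOn_Ioi,
      ← lintegral_const_mul 2 (hpdfm.indicator hSm)]
    exact setLIntegral_congr_fun measurableSet_Ioi
      (fun x hx => chi_pointwise (ne_of_gt (mem_Ioi.mp hx)))
  have hIio : ∫⁻ y in Ioi 0, A.indicator (fun _ => (1 : ℝ≥0∞)) y * chiPDF y
      = 2 * ∫⁻ x in Iio 0, S.indicator (gaussianPDF 0 1) x := by
    rw [chi_cov A hA measurableSet_Iio sq_image_Iio sq_injOn_Iio,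
      ← lintegral_const_mul 2 (hpdfm.indicator hSm)]
    exact setLIntegral_congr_fun measurableSet_Iio
      (fun x hx => chi_pointwise (ne_of_lt (mem_Iio.mp hx)))
  have hsplit : ∫⁻ x in S, gaussianPDF 0 1 x
      = (∫⁻ x in Iio 0, S.indicator (gaussianPDF 0 1) x)
        + ∫⁻ x in Ioi 0, S.indicator (gaussianPDF 0 1) x := by
    rw [← lintegral_indicator hSm, ← lintegral_add_compl _ measurableSet_Iio, compl_Iio]
    congr 1
    exact setLIntegral_congr (Ioi_ae_eq_Ici (a := (0:ℝ))).symm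
  have heq : ∫⁻ x in Iio 0, S.indicator (gaussianPDF 0 1) x
      = ∫⁻ x in Ioi 0, S.indicator (gaussianPDF 0 1) x := by
    have := hIio.symm.trans hIoi
    rwa [ENNReal.mul_right_inj (by norm_num) (by norm_num)] at this
  have hRHS : ∫⁻ y in A, chiPDF y
      = ∫⁻ y in Ioi 0, A.indicator (fun _ => (1 : ℝ≥0∞)) y * chiPDF y := by
    classical
    have hsupp : Function.support (A.indicator chiPDF) ⊆ Ioi 0 := by
      intro y hy
      by_contra h
      apply hy
      rw [Set.indicator_apply]
      split_ifs <;> simp [chiPDF_eq_zero (not_lt.mp (by simpa using h))]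
    rw [← lintegral_indicator hA, ← setLIntegral_eq_of_support_subset hsupp]
    refine setLIntegral_congr_fun measurableSet_Ioi (fun y _ => ?_)
    rw [Set.indicator_apply, Set.indicator_apply]
    split_ifs <;> simp
  rw [hsplit, heq, ← two_mul, hRHS, hIoi]

noncomputable def Tmap : ℝ × ℝ → ℝ × ℝ :=
  fun p => (p.1 * (1 - Real.sin (2 * p.2)), p.1 * (1 + Real.sin (2 * p.2)))

lemma continuous_Tmap : Continuous Tmap := by
  apply Continuous.prodMk
  · exact continuous_fst.mul (continuous_const.sub (Real.continuous_sin.comp (continuous_const.mul continuous_snd)))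
  · exact continuous_fst.mul (continuous_const.add (Real.continuous_sin.comp (continuous_const.mul continuous_snd)))

lemma withDensity_prod {f g : ℝ → ℝ≥0∞} (hf : Measurable f) (hg : Measurable g)
    [SigmaFinite (volume.withDensity f)] [SigmaFinite (volume.withDensity g)] :
    (volume.withDensity f).prod (volume.withDensity g)
      = (volume : Measure (ℝ × ℝ)).withDensity fun p => f p.1 * g p.2 := by
  refine Measure.prod_eq fun s t hs ht => ?_
  rw [withDensity_apply _ (hs.prod ht), Measure.volume_eq_prod, ← Measure.prod_restrict,
    lintegral_prod_mul hf.aemeasurable hg.aemeasurable,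
    withDensity_apply _ hs, withDensity_apply _ ht]

noncomputable def Bmat (p : ℝ × ℝ) : ℝ × ℝ →L[ℝ] ℝ × ℝ :=
  LinearMap.toContinuousLinearMap (Matrix.toLin (Module.Basis.finTwoProd ℝ) (Module.Basis.finTwoProd ℝ)
    !![1 - Real.sin (2 * p.2), -(2 * p.1 * Real.cos (2 * p.2));
       1 + Real.sin (2 * p.2), 2 * p.1 * Real.cos (2 * p.2)])

lemma Bmat_det (p : ℝ × ℝ) : (Bmat p).det = 4 * p.1 * Real.cos (2 * p.2) := by
  simp only [Bmat, LinearMap.det_toContinuousLinearMap, LinearMap.det_toLin,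
    Matrix.det_fin_two_of]
  ring

lemma hasFDerivAt_Tmap (p : ℝ × ℝ) : HasFDerivAt Tmap (Bmat p) p := by
  rw [Bmat, Matrix.toLin_finTwoProd_toContinuousLinearMap]
  have h1 : HasFDerivAt (fun p : ℝ × ℝ => 2 * p.2)
      ((2 : ℝ) • ContinuousLinearMap.snd ℝ ℝ ℝ) p := hasFDerivAt_snd.const_mul 2
  have hsin : HasFDerivAt (fun p : ℝ × ℝ => Real.sin (2 * p.2))
      ((2 * Real.cos (2 * p.2)) • ContinuousLinearMap.snd ℝ ℝ ℝ) p := by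
    have h2 := (Real.hasDerivAt_sin (2 * p.2)).comp_hasFDerivAt p h1
    rwa [smul_smul, mul_comm] at h2
  have hXc : HasFDerivAt (fun p : ℝ × ℝ => 1 - Real.sin (2 * p.2))
      (-((2 * Real.cos (2 * p.2)) • ContinuousLinearMap.snd ℝ ℝ ℝ)) p := hsin.const_sub 1
  have hYc : HasFDerivAt (fun p : ℝ × ℝ => 1 + Real.sin (2 * p.2))
      ((2 * Real.cos (2 * p.2)) • ContinuousLinearMap.snd ℝ ℝ ℝ) p := by
    simpa using hsin.const_add 1
  have hX := (hasFDerivAt_fst (𝕜 := ℝ) (p := p)).mul hXc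
  have hY := (hasFDerivAt_fst (𝕜 := ℝ) (p := p)).mul hYc
  have h := HasFDerivAt.prodMk hX hY
  refine HasFDerivAt.congr_fderiv h ?_
  refine ContinuousLinearMap.ext fun q => Prod.ext ?_ ?_ <;>
    simp only [ContinuousLinearMap.prod_apply, ContinuousLinearMap.add_apply,
      ContinuousLinearMap.smul_apply, ContinuousLinearMap.coe_fst',
      ContinuousLinearMap.coe_snd', ContinuousLinearMap.neg_apply,
      smul_eq_mul, Prod.fst, Prod.snd] <;>
    ring

lemma Tmap_injOn : InjOn Tmap ((Ioi 0 : Set ℝ) ×ˢ Ioo (-(π / 4)) (π / 4)) := by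
  rintro ⟨w, t⟩ ⟨hw, ht⟩ ⟨w', t'⟩ ⟨hw', ht'⟩ h
  simp only [Tmap, Prod.mk.injEq] at h
  obtain ⟨h1, h2⟩ := h
  simp only [mem_Ioi, mem_Ioo] at hw ht hw' ht'
  have hww : w = w' := by nlinarith
  subst hww
  have hsin : Real.sin (2 * t) = Real.sin (2 * t') := by nlinarith
  have h2t : 2 * t = 2 * t' := by
    refine Real.injOn_sin ⟨by linarith [ht.1], by linarith [ht.2]⟩
      ⟨by linarith [ht'.1], by linarith [ht'.2]⟩ hsin
  have : t = t' := by linarith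
  simp [this]

lemma sin_two_mem {t : ℝ} (ht : t ∈ Ioo (-(π / 4)) (π / 4)) :
    Real.sin (2 * t) ∈ Ioo (-1 : ℝ) 1 := by
  simp only [mem_Ioo] at ht ⊢
  have hmem : 2 * t ∈ Icc (-(π / 2)) (π / 2) := ⟨by linarith [ht.1], by linarith [ht.2]⟩
  have hl : Real.sin (-(π / 2)) < Real.sin (2 * t) := by
    refine Real.strictMonoOn_sin ⟨le_refl _, by linarith [Real.pi_pos]⟩ hmem ?_
    linarith [ht.1]
  have hr : Real.sin (2 * t) < Real.sin (π / 2) := by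
    refine Real.strictMonoOn_sin hmem ⟨by linarith [Real.pi_pos], le_refl _⟩ ?_
    linarith [ht.2]
  rw [Real.sin_pi_div_two] at hr
  rw [Real.sin_neg, Real.sin_pi_div_two] at hl
  exact ⟨hl, hr⟩

lemma Tmap_image : Tmap '' ((Ioi 0 : Set ℝ) ×ˢ Ioo (-(π / 4)) (π / 4))
    = (Ioi 0 : Set ℝ) ×ˢ (Ioi 0 : Set ℝ) := by
  ext ⟨x, y⟩
  simp only [mem_image, mem_prod, mem_Ioi, Prod.exists]
  constructor
  · rintro ⟨w, t, ⟨hw, ht⟩, h⟩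
    obtain ⟨hs1, hs2⟩ := sin_two_mem ht
    simp only [Tmap, Prod.mk.injEq] at h
    obtain ⟨h1, h2⟩ := h
    subst h1; subst h2
    exact ⟨mul_pos hw (by linarith), mul_pos hw (by linarith)⟩
  · rintro ⟨hx, hy⟩
    have hxy : (0 : ℝ) < x + y := by linarith
    set sv : ℝ := (y - x) / (x + y) with hsv
    have hslt : sv < 1 := by rw [hsv, div_lt_one hxy]; linarith
    have hsgt : -1 < sv := by rw [hsv, lt_div_iff₀ hxy]; linarith
    refine ⟨(x + y) / 2, Real.arcsin sv / 2, ⟨by positivity, ?_, ?_⟩, ?_⟩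
    · nlinarith [(Real.neg_pi_div_two_lt_arcsin (x := sv)).mpr hsgt]
    · nlinarith [(Real.arcsin_lt_pi_div_two (x := sv)).mpr hslt]
    · have h2 : 2 * (Real.arcsin sv / 2) = Real.arcsin sv := by ring
      simp only [Tmap, h2, Real.sin_arcsin hsgt.le hslt.le]
      rw [hsv, Prod.mk.injEq]
      constructor <;> (field_simp; ring)

lemma exp_withDensity : expMeasure 1 = (volume : Measure ℝ).withDensity (exponentialPDF 1) := rfl

lemma unifOn_eq : unifOn (-(π / 4)) (π / 4) = (volume : Measure ℝ).withDensity
    ((Ioo (-(π / 4)) (π / 4)).indicator fun _ => ENNReal.ofReal (2 / π)) := by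
  rw [unifOn, withDensity_indicator measurableSet_Ioo, withDensity_const]
  congr 1
  rw [show (π / 4 - -(π / 4)) = π / 2 by ring, show (2 / π : ℝ) = (π / 2)⁻¹ by
      rw [inv_div], ENNReal.ofReal_inv_of_pos (by positivity)]

instance : IsProbabilityMeasure (unifOn (-(π / 4)) (π / 4)) := by
  constructor
  rw [unifOn]
  simp only [Measure.smul_apply, Measure.restrict_apply MeasurableSet.univ, univ_inter,
    Real.volume_Ioo, smul_eq_mul]
  rw [ENNReal.inv_mul_cancel] <;> simp [ENNReal.ofReal_eq_zero] <;> positivity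

lemma measurable_expPDF : Measurable (exponentialPDF 1) :=
  (measurable_exponentialPDFReal 1).ennreal_ofReal

lemma joint_eq : Measure.map Tmap ((expMeasure 1).prod (unifOn (-(π / 4)) (π / 4)))
    = (volume : Measure (ℝ × ℝ)).withDensity fun p => chiPDF p.1 * chiPDF p.2 := by
  classical
  set uInd : ℝ → ℝ≥0∞ := (Ioo (-(π / 4)) (π / 4)).indicator fun _ => ENNReal.ofReal (2 / π)
    with huInd
  have hum : Measurable uInd := measurable_const.indicator measurableSet_Ioo
  haveI : SigmaFinite ((volume : Measure ℝ).withDensity (exponentialPDF 1)) := by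
    rw [← exp_withDensity]
    haveI := isProbabilityMeasure_expMeasure (r := 1) one_pos
    infer_instance
  haveI : SigmaFinite ((volume : Measure ℝ).withDensity uInd) := by
    rw [huInd, ← unifOn_eq]
    infer_instance
  have hD : (expMeasure 1).prod (unifOn (-(π / 4)) (π / 4))
      = (volume : Measure (ℝ × ℝ)).withDensity
          fun p => exponentialPDF 1 p.1 * uInd p.2 := by
    rw [exp_withDensity, unifOn_eq, ← huInd, withDensity_prod measurable_expPDF hum]
  set s : Set (ℝ × ℝ) := (Ioi 0 : Set ℝ) ×ˢ Ioo (-(π / 4)) (π / 4) with hs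
  have hsm : MeasurableSet s := measurableSet_Ioi.prod measurableSet_Ioo
  ext A hA
  rw [hD, Measure.map_apply continuous_Tmap.measurable hA,
    withDensity_apply _ (continuous_Tmap.measurable hA), withDensity_apply _ hA]
  set D : ℝ × ℝ → ℝ≥0∞ := fun p => exponentialPDF 1 p.1 * uInd p.2 with hDdef
  set F : ℝ × ℝ → ℝ≥0∞ := (Tmap ⁻¹' A).indicator D with hF
  set g : ℝ × ℝ → ℝ≥0∞ :=
    fun p => A.indicator (fun _ => (1 : ℝ≥0∞)) p * (chiPDF p.1 * chiPDF p.2) with hg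
  have hnull : (volume : Measure (ℝ × ℝ)) (({0} : Set ℝ) ×ˢ (univ : Set ℝ)) = 0 := by
    rw [Measure.volume_eq_prod, Measure.prod_prod]
    simp
  -- LHS equals integral over s of F
  have hLHS : ∫⁻ p in Tmap ⁻¹' A, D p = ∫⁻ p in s, F p := by
    rw [← lintegral_indicator (continuous_Tmap.measurable hA), ← hF]
    have hsupp : Function.support F ⊆ (Ici 0 : Set ℝ) ×ˢ Ioo (-(π / 4)) (π / 4) := by
      intro p hp
      rw [Function.mem_support] at hp
      constructor
      · by_contra hc
        apply hp
        rw [hF, Set.indicator_apply]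
        split_ifs with h
        · rw [hDdef]
          simp only
          rw [exponentialPDF_of_neg (by simpa using hc), zero_mul]
        · rfl
      · by_contra hc
        apply hp
        rw [hF, Set.indicator_apply]
        split_ifs with h
        · rw [hDdef]
          simp only
          rw [huInd, Set.indicator_of_notMem hc, mul_zero]
        · rfl
    rw [← setLIntegral_eq_of_support_subset hsupp]
    apply setLIntegral_congr
    rw [hs]
    refine MeasureTheory.ae_eq_set.mpr ⟨measure_mono_null ?_ hnull, measure_mono_null ?_ hnull⟩
    · rintro ⟨a, b⟩ ⟨⟨ha, hb⟩, hnot⟩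
      simp only [mem_prod, mem_Ioi] at hnot ⊢
      constructor
      · by_contra h0
        exact hnot ⟨lt_of_le_of_ne ha (Ne.symm h0), hb⟩
      · trivial
    · rintro ⟨a, b⟩ ⟨⟨ha, hb⟩, hnot⟩
      exact absurd ⟨mem_Ici.mpr (le_of_lt (mem_Ioi.mp ha)), hb⟩ hnot
  -- RHS equals integral over image of g
  have hRHS : ∫⁻ p in A, chiPDF p.1 * chiPDF p.2 = ∫⁻ p in Tmap '' s, g p := by
    rw [hs, Tmap_image]
    have hsupp : Function.support (A.indicator fun p : ℝ × ℝ => chiPDF p.1 * chiPDF p.2)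
        ⊆ (Ioi 0 : Set ℝ) ×ˢ (Ioi 0 : Set ℝ) := by
      intro p hp
      rw [Function.mem_support] at hp
      simp only [mem_prod, mem_Ioi]
      constructor
      · by_contra hc
        apply hp
        rw [Set.indicator_apply]
        split_ifs
        · rw [chiPDF_eq_zero (not_lt.mp hc), zero_mul]
        · rfl
      · by_contra hc
        apply hp
        rw [Set.indicator_apply]
        split_ifs
        · rw [chiPDF_eq_zero (not_lt.mp hc), mul_zero]
        · rfl
    rw [← lintegral_indicator hA, ← setLIntegral_eq_of_support_subset hsupp]
    refine setLIntegral_congr_fun (measurableSet_Ioi.prod measurableSet_Ioi)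
      (fun p _ => ?_)
    by_cases h : p ∈ A <;> simp [hg, h]
  rw [hLHS, hRHS,
    lintegral_image_eq_lintegral_abs_det_fderiv_mul volume hsm
      (fun p _ => (hasFDerivAt_Tmap p).hasFDerivWithinAt) Tmap_injOn g]
  refine setLIntegral_congr_fun hsm (fun p hp => ?_)
  obtain ⟨w, t⟩ := p
  rw [hs] at hp
  obtain ⟨hw, ht⟩ := hp
  have hw : (0 : ℝ) < w := hw
  have ht' : t ∈ Ioo (-(π / 4)) (π / 4) := ht
  obtain ⟨hs1, hs2⟩ := sin_two_mem ht'
  have hc2 : 0 < Real.cos (2 * t) := by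
    apply Real.cos_pos_of_mem_Ioo
    simp only [mem_Ioo] at ht ⊢
    constructor <;> [linarith [ht.1]; linarith [ht.2]]
  have hx : (0 : ℝ) < w * (1 - Real.sin (2 * t)) := mul_pos hw (by linarith)
  have hy : (0 : ℝ) < w * (1 + Real.sin (2 * t)) := mul_pos hw (by linarith)
  rw [Bmat_det]
  have hsq : Real.sqrt (2 * π * (w * (1 - Real.sin (2 * t))))
      * Real.sqrt (2 * π * (w * (1 + Real.sin (2 * t))))
      = 2 * π * w * Real.cos (2 * t) := by
    rw [← Real.sqrt_mul (by positivity)]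
    have heq : 2 * π * (w * (1 - Real.sin (2 * t))) * (2 * π * (w * (1 + Real.sin (2 * t))))
        = (2 * π * w * Real.cos (2 * t)) ^ 2 := by
      have hpyth := Real.sin_sq_add_cos_sq (2 * t)
      linear_combination (-(2 * π * w) ^ 2) * hpyth
    rw [heq, Real.sqrt_sq (by positivity)]
  have hexp : Real.exp (-(w * (1 - Real.sin (2 * t))) / 2)
      * Real.exp (-(w * (1 + Real.sin (2 * t))) / 2) = Real.exp (-w) := by
    rw [← Real.exp_add]
    congr 1
    ring
  by_cases hmem : Tmap (w, t) ∈ A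
  · have hwt : (w, t) ∈ Tmap ⁻¹' A := hmem
    simp only [hF, hg, hDdef, huInd, Set.indicator_of_mem hmem, Set.indicator_of_mem hwt,
      Set.indicator_of_mem ht', one_mul]
    rw [exponentialPDF_of_nonneg hw.le]
    have hT1 : (Tmap (w, t)).1 = w * (1 - Real.sin (2 * t)) := rfl
    have hT2 : (Tmap (w, t)).2 = w * (1 + Real.sin (2 * t)) := rfl
    rw [hT1, hT2, chiPDF, chiPDF, if_pos hx, if_pos hy,
      abs_of_pos (by positivity : (0:ℝ) < 4 * w * Real.cos (2 * t))]
    rw [← ENNReal.ofReal_mul (by positivity), ← ENNReal.ofReal_mul (by positivity),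
      ← ENNReal.ofReal_mul (by positivity)]
    congr 1
    have h1 : (Real.sqrt (2 * π * (w * (1 - Real.sin (2 * t)))))⁻¹
          * Real.exp (-(w * (1 - Real.sin (2 * t))) / 2)
          * ((Real.sqrt (2 * π * (w * (1 + Real.sin (2 * t)))))⁻¹
            * Real.exp (-(w * (1 + Real.sin (2 * t))) / 2))
        = (Real.sqrt (2 * π * (w * (1 - Real.sin (2 * t))))
            * Real.sqrt (2 * π * (w * (1 + Real.sin (2 * t)))))⁻¹
          * (Real.exp (-(w * (1 - Real.sin (2 * t))) / 2)
            * Real.exp (-(w * (1 + Real.sin (2 * t))) / 2)) := by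
      rw [mul_inv]
      ring
    rw [h1, hsq, hexp]
    have hπ : (π : ℝ) ≠ 0 := ne_of_gt Real.pi_pos
    have hw0 : w ≠ 0 := ne_of_gt hw
    have hc0 : Real.cos (2 * t) ≠ 0 := ne_of_gt hc2
    field_simp
    ring
  · have hwt : (w, t) ∉ Tmap ⁻¹' A := hmem
    simp only [hF, hg, hDdef, huInd, Set.indicator_of_notMem hmem,
      Set.indicator_of_notMem hwt, zero_mul, mul_zero]

/-- Forward direction of Lemma 1: for 2-bit phase quantization, `X = W(1 − sin 2θ)` and
`Y = W(1 + sin 2θ)` are independent, each distributed as the square of a standard real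
Gaussian (chi-square with one degree of freedom). -/
theorem stmt6
    {Ω : Type*} [MeasurableSpace Ω] (P : Measure Ω) [IsProbabilityMeasure P]
    (W θ : Ω → ℝ) (hW : Measurable W) (hθ : Measurable θ)
    (hWlaw : Measure.map W P = expMeasure 1)
    (hθlaw : Measure.map θ P = unifOn (-(π / 4)) (π / 4))
    (hindep : IndepFun W θ P) :
    IndepFun (fun ω => W ω * (1 - Real.sin (2 * θ ω)))
        (fun ω => W ω * (1 + Real.sin (2 * θ ω))) P
    ∧ Measure.map (fun ω => W ω * (1 - Real.sin (2 * θ ω))) P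
        = Measure.map (fun g : ℝ => g ^ 2) (gaussianReal 0 1)
    ∧ Measure.map (fun ω => W ω * (1 + Real.sin (2 * θ ω))) P
        = Measure.map (fun g : ℝ => g ^ 2) (gaussianReal 0 1) := by
  set X : Ω → ℝ := fun ω => W ω * (1 - Real.sin (2 * θ ω)) with hXdef
  set Y : Ω → ℝ := fun ω => W ω * (1 + Real.sin (2 * θ ω)) with hYdef
  have hX : Measurable X := hW.mul (measurable_const.sub (Real.measurable_sin.comp (measurable_const.mul hθ)))
  have hY : Measurable Y := hW.mul (measurable_const.add (Real.measurable_sin.comp (measurable_const.mul hθ)))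
  set chi : Measure ℝ := Measure.map (fun g : ℝ => g ^ 2) (gaussianReal 0 1) with hchi
  haveI : IsProbabilityMeasure chi :=
    Measure.isProbabilityMeasure_map (measurable_id.pow_const 2).aemeasurable
  -- joint law
  have hpair : (fun ω => (X ω, Y ω)) = Tmap ∘ (fun ω => (W ω, θ ω)) := rfl
  have hWθ : Measure.map (fun ω => (W ω, θ ω)) P
      = (expMeasure 1).prod (unifOn (-(π / 4)) (π / 4)) := by
    rw [← hWlaw, ← hθlaw]
    exact (indepFun_iff_map_prod_eq_prod_map_map hW.aemeasurable hθ.aemeasurable).mp hindep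
  haveI : SigmaFinite ((volume : Measure ℝ).withDensity chiPDF) := by
    rw [← chi_eq]; infer_instance
  have hXY : Measure.map (fun ω => (X ω, Y ω)) P = chi.prod chi := by
    rw [hpair, ← Measure.map_map continuous_Tmap.measurable (hW.prodMk hθ), hWθ, joint_eq,
      hchi, chi_eq, withDensity_prod measurable_chiPDF measurable_chiPDF]
  have hXlaw : Measure.map X P = chi := by
    have : Measure.map X P = Measure.map Prod.fst (Measure.map (fun ω => (X ω, Y ω)) P) := by
      rw [Measure.map_map measurable_fst (hX.prodMk hY)]; rfl
    rw [this, hXY, Measure.map_fst_prod, measure_univ, one_smul]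
  have hYlaw : Measure.map Y P = chi := by
    have : Measure.map Y P = Measure.map Prod.snd (Measure.map (fun ω => (X ω, Y ω)) P) := by
      rw [Measure.map_map measurable_snd (hX.prodMk hY)]; rfl
    rw [this, hXY, Measure.map_snd_prod, measure_univ, one_smul]
  refine ⟨?_, hXlaw, hYlaw⟩
  rw [indepFun_iff_map_prod_eq_prod_map_map hX.aemeasurable hY.aemeasurable, hXY, hXlaw, hYlaw]
end

section
/- Let n ≥ 1 be an integer, let W be an Exp(1) random variable and θ an independent U(−π/2^n, π/2^n) random variable, and set Z = √(2W) · cos(θ + π/4) and Z̃ = √(2W) · sin(θ + π/4). Then Cov(Z, Z̃) = (2^n/π) · sin(π/2^n) · ( cos(π/2^n) − 2^{n−2} · sin(π/2^n) ). In particular, if n ≠ 2 then Cov(Z, Z̃) ≠ 0, so Z and Z̃ are not independent. (Converse direction of Lemma 1: Z and Z̃ are independent only when n = 2.) -/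
open MeasureTheory ProbabilityTheory Real

private lemma exp_int' (g : ℝ → ℝ) :
    ∫ x, g x ∂(expMeasure 1) = ∫ x in Set.Ioi (0:ℝ), Real.exp (-x) * g x := by
  have hpdf : ∀ x, gammaPDFReal 1 1 x = if 0 ≤ x then Real.exp (-x) else 0 := by
    intro x
    simp [gammaPDFReal, Real.Gamma_one, Real.rpow_zero]
  have h0 : expMeasure 1
      = volume.withDensity fun x => ((gammaPDFReal 1 1 x).toNNReal : ENNReal) := rfl
  rw [h0, integral_withDensity_eq_integral_smul (measurable_gammaPDFReal 1 1).real_toNNReal g]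
  have : (fun x => (gammaPDFReal 1 1 x).toNNReal • g x)
      = (Set.Ici (0:ℝ)).indicator (fun x => Real.exp (-x) * g x) := by
    funext x
    simp only [NNReal.smul_def, Real.coe_toNNReal', hpdf x]
    by_cases hx : 0 ≤ x
    · simp [hx, Set.indicator_of_mem, Real.exp_nonneg, max_eq_left, (Real.exp_nonneg _)]
    · simp [hx, Set.indicator_of_notMem]
  rw [this, integral_indicator measurableSet_Ici, integral_Ici_eq_integral_Ioi]

private lemma unif_int' (a : ℝ) (ha : 0 < a) (g : ℝ → ℝ) :
    ∫ x, g x ∂(unifOn (-a) a) = (2*a)⁻¹ * ∫ x in (-a)..a, g x := by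
  rw [unifOn, integral_smul_measure]
  have h1 : a - -a = 2*a := by ring
  rw [h1, ENNReal.toReal_inv, ENNReal.toReal_ofReal (by positivity)]
  rw [intervalIntegral.integral_of_le (by linarith), ← integral_Ioc_eq_integral_Ioo]
  simp [smul_eq_mul]

private lemma gamma32' : ∫ x in Set.Ioi (0:ℝ), Real.exp (-x) * Real.sqrt (2*x)
    = Real.sqrt (2*π) / 2 := by
  have h := Real.Gamma_eq_integral (by norm_num : (0:ℝ) < 3/2)
  have h2 : Real.Gamma (3/2) = Real.sqrt π / 2 := by
    have := Real.Gamma_add_one (by norm_num : (1/2 : ℝ) ≠ 0)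
    rw [show (3/2 : ℝ) = 1/2 + 1 by norm_num, this, Real.Gamma_one_half_eq]
    ring
  have h3 : ∫ x in Set.Ioi (0:ℝ), Real.exp (-x) * Real.sqrt (2*x)
      = Real.sqrt 2 * ∫ x in Set.Ioi (0:ℝ), Real.exp (-x) * x ^ ((3:ℝ)/2 - 1) := by
    rw [← integral_const_mul]
    apply setIntegral_congr_fun measurableSet_Ioi
    intro x hx
    have hx0 : (0:ℝ) ≤ x := le_of_lt hx
    show Real.exp (-x) * Real.sqrt (2*x) = Real.sqrt 2 * (Real.exp (-x) * x ^ ((3:ℝ)/2 - 1))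
    rw [show ((3:ℝ)/2 - 1) = 1/(2:ℝ) by norm_num, ← Real.sqrt_eq_rpow,
      Real.sqrt_mul (by norm_num : (0:ℝ) ≤ 2) x]
    ring
  rw [h3, ← h, h2]
  rw [show Real.sqrt (2*π) = Real.sqrt 2 * Real.sqrt π from Real.sqrt_mul (by norm_num) π]
  ring

private lemma gamma2' :
    ∫ x in Set.Ioi (0:ℝ), Real.exp (-x) * (Real.sqrt (2*x) * Real.sqrt (2*x)) = 2 := by
  have h := Real.Gamma_eq_integral (by norm_num : (0:ℝ) < 2)
  have h2 : Real.Gamma 2 = 1 := by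
    have := Real.Gamma_add_one (one_ne_zero (α := ℝ))
    rw [show (2:ℝ) = 1 + 1 by norm_num, this, Real.Gamma_one]; ring
  have h3 : ∫ x in Set.Ioi (0:ℝ), Real.exp (-x) * (Real.sqrt (2*x) * Real.sqrt (2*x))
      = 2 * ∫ x in Set.Ioi (0:ℝ), Real.exp (-x) * x ^ ((2:ℝ) - 1) := by
    rw [← integral_const_mul]
    apply setIntegral_congr_fun measurableSet_Ioi
    intro x hx
    show Real.exp (-x) * (Real.sqrt (2*x) * Real.sqrt (2*x))
        = 2 * (Real.exp (-x) * x ^ ((2:ℝ)-1))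
    rw [show ((2:ℝ)-1) = 1 by norm_num, Real.rpow_one,
      Real.mul_self_sqrt (by linarith [Set.mem_Ioi.mp hx] : (0:ℝ) ≤ 2*x)]
    ring
  rw [h3, ← h, h2]; norm_num

private lemma int_cos' (a : ℝ) :
    ∫ t in (-a)..a, Real.cos (t + π/4) = Real.sqrt 2 * Real.sin a := by
  have h := intervalIntegral.integral_comp_add_right (a := -a) (b := a) (fun x => Real.cos x)
    (π/4)
  rw [h, integral_cos, Real.sin_sub_sin]
  rw [show (a + π/4 - (-a + π/4))/2 = a by ring, show (a + π/4 + (-a + π/4))/2 = π/4 by ring,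
    Real.cos_pi_div_four]
  ring

private lemma int_sin' (a : ℝ) :
    ∫ t in (-a)..a, Real.sin (t + π/4) = Real.sqrt 2 * Real.sin a := by
  have h := intervalIntegral.integral_comp_add_right (a := -a) (b := a) (fun x => Real.sin x)
    (π/4)
  rw [h, integral_sin, Real.cos_sub_cos]
  rw [show (-a + π/4 + (a + π/4))/2 = π/4 by ring, show (-a + π/4 - (a + π/4))/2 = -a by ring,
    Real.sin_pi_div_four, Real.sin_neg]
  ring

private lemma int_cossin' (a : ℝ) :
    ∫ t in (-a)..a, Real.cos (t + π/4) * Real.sin (t + π/4) = Real.sin a * Real.cos a := by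
  have heq : (fun t => Real.cos (t + π/4) * Real.sin (t + π/4))
      = fun t => (1/2) * Real.cos (2*t) := by
    funext t
    have h1 : Real.sin (2*(t + π/4)) = 2 * Real.sin (t+π/4) * Real.cos (t+π/4) :=
      Real.sin_two_mul _
    have h2 : Real.sin (2*(t + π/4)) = Real.cos (2*t) := by
      rw [show 2*(t+π/4) = 2*t + π/2 by ring, Real.sin_add_pi_div_two]
    nlinarith [h1, h2]
  rw [heq]
  rw [intervalIntegral.integral_const_mul]
  have h := intervalIntegral.integral_comp_mul_left (a := -a) (b := a) (fun x => Real.cos x)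
    (c := 2)
  rw [h (by norm_num), integral_cos, smul_eq_mul]
  rw [Real.sin_two_mul, show (2:ℝ)*(-a) = -(2*a) by ring, Real.sin_neg, Real.sin_two_mul]
  ring

/-- Converse direction of Lemma 1: covariance of `Z` and `Z̃`, nonzero for `n ≠ 2`,
so `Z` and `Z̃` are independent only when `n = 2`. -/
theorem stmt7
    {Ω : Type*} [MeasurableSpace Ω] (P : Measure Ω) [IsProbabilityMeasure P]
    (n : ℕ) (hn : 1 ≤ n)
    (W θ : Ω → ℝ) (hW : Measurable W) (hθ : Measurable θ)
    (hWlaw : Measure.map W P = expMeasure 1)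
    (hθlaw : Measure.map θ P = unifOn (-(π / 2 ^ n)) (π / 2 ^ n))
    (hindep : IndepFun W θ P)
    (Z Zt : Ω → ℝ)
    (hZ : Z = fun ω => Real.sqrt (2 * W ω) * Real.cos (θ ω + π / 4))
    (hZt : Zt = fun ω => Real.sqrt (2 * W ω) * Real.sin (θ ω + π / 4)) :
    ((∫ ω, Z ω * Zt ω ∂P) - (∫ ω, Z ω ∂P) * (∫ ω, Zt ω ∂P)
        = (2 ^ n / π) * Real.sin (π / 2 ^ n)
          * (Real.cos (π / 2 ^ n) - (2 : ℝ) ^ ((n : ℤ) - 2) * Real.sin (π / 2 ^ n)))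
    ∧ (n ≠ 2 →
        ((∫ ω, Z ω * Zt ω ∂P) - (∫ ω, Z ω ∂P) * (∫ ω, Zt ω ∂P) ≠ 0 ∧ ¬ IndepFun Z Zt P)) := by
  set a : ℝ := π / 2 ^ n with ha_def
  have hk : (0:ℝ) < 2 ^ n := by positivity
  have ha : 0 < a := by positivity
  have hzpow : (2:ℝ) ^ ((n:ℤ) - 2) = 2 ^ n / 4 := by
    rw [zpow_sub₀ (two_ne_zero), zpow_natCast]
    norm_num
  -- the key factorization
  have key : ∀ (F G : ℝ → ℝ), Measurable F → Measurable G →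
      ∫ ω, F (W ω) * G (θ ω) ∂P
        = (∫ x, F x ∂(expMeasure 1)) * (∫ x, G x ∂(unifOn (-a) a)) := by
    intro F G hF hG
    have h1 : IndepFun (F ∘ W) (G ∘ θ) P := hindep.comp hF hG
    have h2 := h1.integral_mul_eq_mul_integral (hF.comp hW).aestronglyMeasurable
      (hG.comp hθ).aestronglyMeasurable
    have h3 : ∫ ω, F (W ω) * G (θ ω) ∂P = ∫ ω, ((F ∘ W) * (G ∘ θ)) ω ∂P := rfl
    have h4 : ∫ ω, F (W ω) ∂P = ∫ x, F x ∂(expMeasure 1) := by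
      rw [← hWlaw, integral_map hW.aemeasurable hF.aestronglyMeasurable]
    have h5 : ∫ ω, G (θ ω) ∂P = ∫ x, G x ∂(unifOn (-a) a) := by
      rw [← hθlaw, integral_map hθ.aemeasurable hG.aestronglyMeasurable]
    rw [h3, h2, ← h4, ← h5]
    rfl
  have hFm : Measurable fun x : ℝ => Real.sqrt (2 * x) := by fun_prop
  have hF2m : Measurable fun x : ℝ => Real.sqrt (2 * x) * Real.sqrt (2 * x) := by fun_prop
  have hGcm : Measurable fun x : ℝ => Real.cos (x + π/4) := by fun_prop
  have hGsm : Measurable fun x : ℝ => Real.sin (x + π/4) := by fun_prop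
  have hGcsm : Measurable fun x : ℝ => Real.cos (x + π/4) * Real.sin (x + π/4) := by fun_prop
  -- compute the three expectations
  have hEzz : ∫ ω, Z ω * Zt ω ∂P = 2 * ((2*a)⁻¹ * (Real.sin a * Real.cos a)) := by
    have hptw : (fun ω => Z ω * Zt ω)
        = fun ω => (Real.sqrt (2 * W ω) * Real.sqrt (2 * W ω))
            * (Real.cos (θ ω + π/4) * Real.sin (θ ω + π/4)) := by
      funext ω; rw [hZ, hZt]; ring
    rw [show (∫ ω, Z ω * Zt ω ∂P) = ∫ ω, (fun ω => Z ω * Zt ω) ω ∂P from rfl, hptw,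
      key _ _ hF2m hGcsm, exp_int' _, gamma2', unif_int' a ha _, int_cossin' a]
  have hEz : ∫ ω, Z ω ∂P
      = (Real.sqrt (2*π) / 2) * ((2*a)⁻¹ * (Real.sqrt 2 * Real.sin a)) := by
    rw [hZ, key _ _ hFm hGcm, exp_int' _, gamma32', unif_int' a ha _, int_cos' a]
  have hEzt : ∫ ω, Zt ω ∂P
      = (Real.sqrt (2*π) / 2) * ((2*a)⁻¹ * (Real.sqrt 2 * Real.sin a)) := by
    rw [hZt, key _ _ hFm hGsm, exp_int' _, gamma32', unif_int' a ha _, int_sin' a]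
  -- the covariance identity
  have hsqrt2 : Real.sqrt (2*π) * Real.sqrt 2 = 2 * Real.sqrt π := by
    rw [Real.sqrt_mul (by norm_num : (0:ℝ) ≤ 2) π, mul_right_comm,
      Real.mul_self_sqrt (by norm_num : (0:ℝ) ≤ 2)]
  have hsqpi : Real.sqrt π * Real.sqrt π = π := Real.mul_self_sqrt Real.pi_pos.le
  have hka : (2:ℝ) ^ n * a = π := by
    rw [ha_def]; field_simp
  have hane : a ≠ 0 := ne_of_gt ha
  have hpine : π ≠ 0 := ne_of_gt Real.pi_pos
  have hEz' : ∫ ω, Z ω ∂P = Real.sqrt π * Real.sin a / (2*a) := by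
    rw [hEz]
    linear_combination (Real.sin a / (2*(2*a))) * hsqrt2
  have hEzt' : ∫ ω, Zt ω ∂P = Real.sqrt π * Real.sin a / (2*a) := by
    rw [hEzt]
    linear_combination (Real.sin a / (2*(2*a))) * hsqrt2
  have hEprod : (∫ ω, Z ω ∂P) * (∫ ω, Zt ω ∂P) = π * Real.sin a ^ 2 / (2*a)^2 := by
    rw [hEz', hEzt']
    linear_combination (Real.sin a^2/(2*a)^2) * hsqpi
  have hcov : (∫ ω, Z ω * Zt ω ∂P) - (∫ ω, Z ω ∂P) * (∫ ω, Zt ω ∂P)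
      = (2 ^ n / π) * Real.sin a * (Real.cos a - (2:ℝ) ^ ((n:ℤ) - 2) * Real.sin a) := by
    rw [hEzz, hEprod, hzpow, ← hka]
    have hKne : ((2:ℝ)^n) ≠ 0 := ne_of_gt hk
    field_simp
    ring
  refine ⟨hcov, fun hne2 => ?_⟩
  -- nonvanishing
  have hapos : 0 < Real.sin a := by
    apply Real.sin_pos_of_pos_of_lt_pi ha
    calc a = π / 2^n := rfl
    _ ≤ π / 2 := by
        gcongr
        calc (2:ℝ) = 2^1 := by norm_num
          _ ≤ 2^n := by exact pow_le_pow_right₀ (by norm_num) hn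
    _ < π := by linarith [Real.pi_pos]
  have hnz : (2 ^ n / π) * Real.sin a * (Real.cos a - (2:ℝ) ^ ((n:ℤ) - 2) * Real.sin a) ≠ 0 := by
    have hpos : (0:ℝ) < 2 ^ n / π := by positivity
    rcases Nat.lt_or_ge n 2 with h2 | h2
    · -- n = 1
      interval_cases n
      have haval : a = π / 2 := by rw [ha_def]; norm_num
      have hs1 : Real.sin a = 1 := by rw [haval, Real.sin_pi_div_two]
      have hc1 : Real.cos a = 0 := by rw [haval, Real.cos_pi_div_two]
      rw [hs1, hc1, hzpow]
      intro hcontra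
      rw [div_mul_eq_mul_div, div_mul_eq_mul_div, div_eq_zero_iff] at hcontra
      rcases hcontra with h | h
      · norm_num at h
      · exact hpine h
    · have h3 : 3 ≤ n := by omega
      have hfac : 0 < Real.cos a - (2:ℝ) ^ ((n:ℤ) - 2) * Real.sin a := by
        rw [hzpow]
        have h8 : (8:ℝ) ≤ 2^n := by
          calc (8:ℝ) = 2^3 := by norm_num
          _ ≤ 2^n := pow_le_pow_right₀ (by norm_num) h3
        have hale : a ≤ π/8 := by
          rw [ha_def]
          gcongr
        have hcos : Real.cos (π/6) ≤ Real.cos a := by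
          apply Real.cos_le_cos_of_nonneg_of_le_pi ha.le
          · linarith [Real.pi_pos]
          · linarith [Real.pi_pos]
        have hsin : 2^n/4 * Real.sin a < 2^n/4 * a := by
          apply mul_lt_mul_of_pos_left (Real.sin_lt ha) (by positivity)
        have hsin2 : 2^n/4 * a = π/4 := by
          field_simp
          linarith [hka]
        have hsqrt3 : (1.7:ℝ) < Real.sqrt 3 := by
          have h1 := Real.sq_sqrt (by norm_num : (0:ℝ) ≤ 3)
          have h2 := Real.sqrt_nonneg 3
          nlinarith
        have hpi : π < 3.15 := by
          have := Real.pi_lt_d2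
          linarith
        rw [Real.cos_pi_div_six] at hcos
        linarith
      exact mul_ne_zero (mul_ne_zero (ne_of_gt hpos) (ne_of_gt hapos)) (ne_of_gt hfac)
  rw [hcov]
  refine ⟨hnz, fun hI => ?_⟩
  have hZm : Measurable Z := by
    rw [hZ]; exact (hFm.comp hW).mul (hGcm.comp hθ)
  have hZtm : Measurable Zt := by
    rw [hZt]; exact (hFm.comp hW).mul (hGsm.comp hθ)
  have := hI.integral_mul_eq_mul_integral hZm.aestronglyMeasurable hZtm.aestronglyMeasurable
  have heq : ∫ ω, Z ω * Zt ω ∂P = (∫ ω, Z ω ∂P) * ∫ ω, Zt ω ∂P := this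
  rw [heq] at hcov
  rw [← hcov] at hnz
  simp at hnz
end

section
/- Let W be an Exp(1) random variable and θ an independent U(−π/4, π/4) random variable. Then for every v ≥ 0, P( W·(1 − |sin 2θ|) ≤ v ) = 1 − 4·(Q(√v))². (Distribution of the per-branch selection statistic V_i = |h_i|²(1 − |sin 2θ̃_i|) used for selection combining, equation (T_distr).) -/
open MeasureTheory ProbabilityTheory Real

section helpers
open Set

lemma my_integrableOn {g : ℝ → ℝ} (hg : Measurable g) (C : ℝ)
    (hC : ∀ t, |g t| ≤ C) {s : Set ℝ} (hs : volume s < ⊤) :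
    IntegrableOn g s volume := by
  haveI : IsFiniteMeasure (volume.restrict s) :=
    ⟨by rw [Measure.restrict_apply_univ]; exact hs⟩
  apply Integrable.mono' (g := fun _ => C) (integrable_const C)
    hg.aestronglyMeasurable.restrict
  filter_upwards with t using hC t

lemma my_intervalIntegrable {g : ℝ → ℝ} (hg : Measurable g) (C : ℝ)
    (hC : ∀ t, |g t| ≤ C) (a b : ℝ) : IntervalIntegrable g volume a b := by
  rw [intervalIntegrable_iff]
  haveI : IsFiniteMeasure (volume.restrict (Set.uIoc a b)) :=
    ⟨by rw [Measure.restrict_apply_univ, Set.uIoc]; exact measure_Ioc_lt_top⟩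
  apply Integrable.mono' (g := fun _ => C) (integrable_const C)
    hg.aestronglyMeasurable.restrict
  filter_upwards with t using hC t

lemma expMeasure_Iic {x : ℝ} (hx : 0 ≤ x) :
    expMeasure 1 (Set.Iic x) = ENNReal.ofReal (1 - Real.exp (-x)) := by
  haveI := isProbabilityMeasure_expMeasure (one_pos)
  rw [← ofReal_cdf]
  have h := cdf_expMeasure_eq one_pos x
  rw [h, if_pos hx, one_mul]

lemma integral_r_exp (c : ℝ) :
    ∫ r in Set.Ioi c, r * Real.exp (-r ^ 2 / 2) = Real.exp (-c ^ 2 / 2) := by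
  have hderiv : ∀ r ∈ Set.Ici c, HasDerivAt (fun r : ℝ => -Real.exp (-r ^ 2 / 2))
      (r * Real.exp (-r ^ 2 / 2)) r := by
    intro r _
    have h1 : HasDerivAt (fun r : ℝ => -r ^ 2 / 2) (-r) r := by
      have : HasDerivAt (fun x : ℝ => -x ^ 2 / 2) _ r := ((hasDerivAt_pow 2 r).neg).div_const 2
      convert this using 1
      push_cast; ring
    have : HasDerivAt (fun r : ℝ => -Real.exp (-r ^ 2 / 2)) _ r := (h1.exp).neg
    convert this using 1
    ring
  have hint : IntegrableOn (fun r : ℝ => r * Real.exp (-r ^ 2 / 2)) (Set.Ioi c) := by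
    have := (integrable_mul_exp_neg_mul_sq (b := (1:ℝ)/2) (by norm_num)).restrict (s := Set.Ioi c)
    apply this.congr
    filter_upwards with r
    ring_nf
  have htend : Filter.Tendsto (fun r : ℝ => -Real.exp (-r ^ 2 / 2)) Filter.atTop (nhds 0) := by
    rw [← neg_zero]
    apply Filter.Tendsto.neg
    apply Real.tendsto_exp_atBot.comp
    have h2 : Filter.Tendsto (fun r : ℝ => r ^ 2 / 2) Filter.atTop Filter.atTop := by
      apply Filter.Tendsto.atTop_div_const (by norm_num)
      exact Filter.tendsto_pow_atTop (by norm_num)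
    have h3 := Filter.tendsto_neg_atBot_iff.mpr h2
    convert h3 using 2 with r
    ring
  have := integral_Ioi_of_hasDerivAt_of_tendsto' hderiv hint htend
  rw [this]; ring

lemma craig {x : ℝ} (hx : 0 ≤ x) :
    (∫ t in Set.Ioi x, Real.exp (-t ^ 2 / 2)) ^ 2
      = 2 * ∫ φ in (0:ℝ)..(π/4), Real.exp (-x ^ 2 / (2 * Real.sin φ ^ 2)) := by
  set f : ℝ → ℝ := fun t => Real.exp (-t ^ 2 / 2) with hf
  have hfm : Measurable f := by fun_prop
  have hfnn : ∀ t, 0 ≤ f t := fun t => (Real.exp_pos _).le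
  have hfle : ∀ t, f t ≤ 1 := by
    intro t
    rw [hf]
    simp only
    rw [show (1:ℝ) = Real.exp 0 by simp]
    apply Real.exp_le_exp.mpr
    have : (0:ℝ) ≤ t ^ 2 := sq_nonneg t
    linarith
  set If : ℝ → ℝ := (Set.Ioi x).indicator f with hIf
  have hIfm : Measurable If := hfm.indicator measurableSet_Ioi
  -- Step 1: square as a double integral
  have step1 : (∫ t in Set.Ioi x, f t) ^ 2 = ∫ p : ℝ × ℝ, If p.1 * If p.2 := by
    rw [Measure.volume_eq_prod ℝ ℝ, integral_prod_mul, ← integral_indicator measurableSet_Ioi, sq]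
  -- Step 2: polar coordinates
  have step2 : ∫ p : ℝ × ℝ, If p.1 * If p.2
      = ∫ p in Set.Ioi (0:ℝ) ×ˢ Set.Ioo (-π) π,
          p.1 * (If (p.1 * Real.cos p.2) * If (p.1 * Real.sin p.2)) := by
    rw [← integral_comp_polarCoord_symm (fun q => If q.1 * If q.2)]
    rw [polarCoord_target]
    apply setIntegral_congr_fun (measurableSet_Ioi.prod measurableSet_Ioo)
    intro p _
    have hsymm : polarCoord.symm p = (p.1 * Real.cos p.2, p.1 * Real.sin p.2) := rfl
    simp only [hsymm, smul_eq_mul]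
  -- the integrand in polar coordinates
  set g : ℝ × ℝ → ℝ := fun p => p.1 * (If (p.1 * Real.cos p.2) * If (p.1 * Real.sin p.2)) with hg
  have hgm : Measurable g := by
    apply measurable_fst.mul
    exact (hIfm.comp (measurable_fst.mul (Real.measurable_cos.comp measurable_snd))).mul
      (hIfm.comp (measurable_fst.mul (Real.measurable_sin.comp measurable_snd)))
  have key : ∀ p : ℝ × ℝ, (p.1 * Real.cos p.2) ^ 2 + (p.1 * Real.sin p.2) ^ 2 = p.1 ^ 2 := by
    intro p
    have := Real.sin_sq_add_cos_sq p.2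
    nlinarith
  have hprod_f : ∀ p : ℝ × ℝ, f (p.1 * Real.cos p.2) * f (p.1 * Real.sin p.2)
      = Real.exp (-p.1 ^ 2 / 2) := by
    intro p
    rw [hf]
    simp only
    rw [← Real.exp_add, ← key p]
    ring_nf
  haveI : IsFiniteMeasure (volume.restrict (Set.Ioo (-π) π)) :=
    ⟨by rw [Measure.restrict_apply_univ]; exact measure_Ioo_lt_top⟩
  have hInt : Integrable g
      ((volume.restrict (Set.Ioi (0:ℝ))).prod (volume.restrict (Set.Ioo (-π) π))) := by
    have hbase : Integrable (fun r : ℝ => |r| * Real.exp (-r ^ 2 / 2))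
        (volume.restrict (Set.Ioi (0:ℝ))) := by
      have h0 := (integrable_mul_exp_neg_mul_sq (b := (1:ℝ)/2) (by norm_num)).abs
      have h1 : Integrable (fun r : ℝ => |r| * Real.exp (-r ^ 2 / 2)) volume := by
        apply h0.congr
        filter_upwards with r
        rw [abs_mul, abs_of_pos (Real.exp_pos _)]
        ring_nf
      exact h1.restrict
    have hone : Integrable (fun _ : ℝ => (1:ℝ)) (volume.restrict (Set.Ioo (-π) π)) :=
      integrable_const 1
    have hb2 := Integrable.mul_prod hbase hone
    apply Integrable.mono' hb2 hgm.aestronglyMeasurable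
    filter_upwards with p
    have hIle : ∀ t : ℝ, If t ≤ f t := fun t => by
      rw [hIf]; exact Set.indicator_le_self' (fun s _ => hfnn s) t
    have hInn : ∀ t : ℝ, 0 ≤ If t := fun t => by
      rw [hIf]; exact Set.indicator_nonneg (fun s _ => hfnn s) t
    have h1 : |g p| = |p.1| * (If (p.1 * Real.cos p.2) * If (p.1 * Real.sin p.2)) := by
      rw [hg]
      simp only
      rw [abs_mul, abs_of_nonneg (mul_nonneg (hInn _) (hInn _))]
    rw [Real.norm_eq_abs, h1]
    have h2 : If (p.1 * Real.cos p.2) * If (p.1 * Real.sin p.2) ≤ Real.exp (-p.1 ^ 2 / 2) := by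
      calc If (p.1 * Real.cos p.2) * If (p.1 * Real.sin p.2)
          ≤ f (p.1 * Real.cos p.2) * f (p.1 * Real.sin p.2) :=
            mul_le_mul (hIle _) (hIle _) (hInn _) (hfnn _)
        _ = Real.exp (-p.1 ^ 2 / 2) := hprod_f p
    calc |p.1| * (If (p.1 * Real.cos p.2) * If (p.1 * Real.sin p.2))
        ≤ |p.1| * Real.exp (-p.1 ^ 2 / 2) := by
          apply mul_le_mul_of_nonneg_left h2 (abs_nonneg _)
      _ = |p.1| * Real.exp (-p.1 ^ 2 / 2) * 1 := by ring
  -- Fubini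
  have step3 : (∫ p in Set.Ioi (0:ℝ) ×ˢ Set.Ioo (-π) π, g p)
      = ∫ φ in Set.Ioo (-π) π, ∫ r in Set.Ioi (0:ℝ), g (r, φ) := by
    rw [Measure.volume_eq_prod ℝ ℝ, ← Measure.prod_restrict, integral_prod_symm _ hInt]
  -- inner integral evaluation
  have inner_eval : ∀ φ : ℝ, (∫ r in Set.Ioi (0:ℝ), g (r, φ))
      = if 0 < Real.sin φ ∧ 0 < Real.cos φ then
          Real.exp (-x ^ 2 / (2 * min (Real.sin φ) (Real.cos φ) ^ 2)) else 0 := by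
    intro φ
    by_cases hsc : 0 < Real.sin φ ∧ 0 < Real.cos φ
    · rw [if_pos hsc]
      set m := min (Real.sin φ) (Real.cos φ) with hm
      have hmpos : 0 < m := lt_min hsc.1 hsc.2
      set c := x / m with hc
      have hcnn : 0 ≤ c := div_nonneg hx hmpos.le
      have hgr : ∀ r ∈ Set.Ioi (0:ℝ), g (r, φ)
          = (Set.Ioi c).indicator (fun r => r * Real.exp (-r ^ 2 / 2)) r := by
        intro r hr
        have hr0 : (0:ℝ) < r := hr
        by_cases hrc : r ∈ Set.Ioi c
        · have hrm : x < r * m := by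
            rw [hc, Set.mem_Ioi, div_lt_iff₀ hmpos] at hrc
            exact hrc
          have hcos : x < r * Real.cos φ :=
            lt_of_lt_of_le hrm (by nlinarith [min_le_right (Real.sin φ) (Real.cos φ)])
          have hsin : x < r * Real.sin φ :=
            lt_of_lt_of_le hrm (by nlinarith [min_le_left (Real.sin φ) (Real.cos φ)])
          rw [Set.indicator_of_mem hrc]
          rw [hg]
          simp only
          rw [hIf, Set.indicator_of_mem (by exact hcos : r * Real.cos φ ∈ Set.Ioi x),
            Set.indicator_of_mem (by exact hsin : r * Real.sin φ ∈ Set.Ioi x)]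
          rw [hprod_f (r, φ)]
        · rw [Set.indicator_of_notMem hrc]
          have hrmx : r * m ≤ x := by
            have h' : r ≤ x / m := not_lt.mp (by simpa using hrc)
            exact (le_div_iff₀ hmpos).mp h'
          rw [hg]
          simp only
          rcases le_total (Real.sin φ) (Real.cos φ) with h | h
          · have hms : m = Real.sin φ := min_eq_left h
            have hle : r * Real.sin φ ≤ x := by rw [← hms]; exact hrmx
            have hz0 : (Set.Ioi x).indicator f (r * Real.sin φ) = 0 :=
              Set.indicator_of_notMem (by simpa using not_lt.mpr hle) f
            rw [hIf, hz0]
            ring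
          · have hmc : m = Real.cos φ := min_eq_right h
            have hle : r * Real.cos φ ≤ x := by rw [← hmc]; exact hrmx
            have hz0 : (Set.Ioi x).indicator f (r * Real.cos φ) = 0 :=
              Set.indicator_of_notMem (by simpa using not_lt.mpr hle) f
            rw [hIf, hz0]
            ring
      rw [setIntegral_congr_fun measurableSet_Ioi hgr,
        setIntegral_indicator measurableSet_Ioi,
        Set.Ioi_inter_Ioi, max_eq_right hcnn, integral_r_exp c]
      congr 1
      rw [hc, div_pow, neg_div, neg_div, div_div, mul_comm (m ^ 2) 2]
    · rw [if_neg hsc]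
      have hz : ∀ r ∈ Set.Ioi (0:ℝ), g (r, φ) = (0:ℝ) := by
        intro r hr
        have hr0 : (0:ℝ) < r := hr
        rw [hg]
        simp only
        rcases not_and_or.mp hsc with h | h
        · push_neg at h
          have hsx : r * Real.sin φ ≤ x := le_trans (by nlinarith) hx
          have hz0 : (Set.Ioi x).indicator f (r * Real.sin φ) = 0 :=
            Set.indicator_of_notMem (by simpa using not_lt.mpr hsx) f
          rw [hIf, hz0]
          ring
        · push_neg at h
          have hcx : r * Real.cos φ ≤ x := le_trans (by nlinarith) hx
          have hz0 : (Set.Ioi x).indicator f (r * Real.cos φ) = 0 :=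
            Set.indicator_of_notMem (by simpa using not_lt.mpr hcx) f
          rw [hIf, hz0]
          ring
      rw [setIntegral_congr_fun measurableSet_Ioi hz, integral_zero]
  -- reduce the angular range to (0, π/2)
  set H : ℝ → ℝ := fun φ => Real.exp (-x ^ 2 / (2 * min (Real.sin φ) (Real.cos φ) ^ 2)) with hH
  have step5 : (∫ φ in Set.Ioo (-π) π,
        if 0 < Real.sin φ ∧ 0 < Real.cos φ then H φ else 0)
      = ∫ φ in Set.Ioo (0:ℝ) (π/2), H φ := by
    have hcong : ∀ φ ∈ Set.Ioo (-π) π,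
        (if 0 < Real.sin φ ∧ 0 < Real.cos φ then H φ else 0)
          = (Set.Ioo (0:ℝ) (π/2)).indicator H φ := by
      intro φ hφ
      have hiff : (0 < Real.sin φ ∧ 0 < Real.cos φ) ↔ φ ∈ Set.Ioo (0:ℝ) (π/2) := by
        constructor
        · rintro ⟨hs, hc⟩
          constructor
          · by_contra hcon
            push_neg at hcon
            have := Real.sin_nonpos_of_nonpos_of_neg_pi_le hcon hφ.1.le
            linarith
          · by_contra hcon
            push_neg at hcon
            have := Real.cos_nonpos_of_pi_div_two_le_of_le hcon (by linarith [hφ.2, Real.pi_pos])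
            linarith
        · rintro ⟨h1, h2⟩
          exact ⟨Real.sin_pos_of_pos_of_lt_pi h1 (by linarith [Real.pi_pos]),
            Real.cos_pos_of_mem_Ioo ⟨by linarith [Real.pi_pos], h2⟩⟩
      rw [Set.indicator_apply]
      exact if_congr hiff rfl rfl
    rw [setIntegral_congr_fun measurableSet_Ioo hcong,
      setIntegral_indicator measurableSet_Ioo,
      Set.inter_eq_self_of_subset_right
        (Set.Ioo_subset_Ioo (by linarith [Real.pi_pos]) (by linarith [Real.pi_pos]))]
  -- H is measurable and bounded
  have hHm : Measurable H := by
    apply Real.measurable_exp.comp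
    apply Measurable.div measurable_const
    exact (((Real.measurable_sin.min Real.measurable_cos).pow_const 2).const_mul 2)
  have hHb : ∀ t, |H t| ≤ 1 := by
    intro t
    rw [hH]
    simp only
    rw [abs_of_pos (Real.exp_pos _)]
    apply Real.exp_le_one_iff.mpr
    apply div_nonpos_of_nonpos_of_nonneg (neg_nonpos.mpr (sq_nonneg x))
    positivity
  -- split the integral at π/4 and substitute
  have hq : (0:ℝ) < π/4 := by linarith [Real.pi_pos]
  have split : (∫ φ in Set.Ioo (0:ℝ) (π/2), H φ)
      = (∫ φ in (0:ℝ)..(π/4), H φ) + ∫ φ in (π/4:ℝ)..(π/2), H φ := by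
    rw [intervalIntegral.integral_add_adjacent_intervals
      (my_intervalIntegrable hHm 1 hHb 0 (π/4)) (my_intervalIntegrable hHm 1 hHb (π/4) (π/2))]
    rw [intervalIntegral.integral_of_le (by linarith), integral_Ioc_eq_integral_Ioo]
  have sin_le_cos : ∀ φ ∈ Set.Icc (0:ℝ) (π/4), Real.sin φ ≤ Real.cos φ := by
    intro φ hφ
    have h := Real.cos_nonneg_of_mem_Icc (x := φ + π/4)
      ⟨by linarith [hφ.1, Real.pi_pos], by linarith [hφ.2]⟩
    rw [Real.cos_add, Real.cos_pi_div_four, Real.sin_pi_div_four] at h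
    nlinarith [Real.sq_sqrt (by norm_num : (0:ℝ) ≤ 2), Real.sqrt_nonneg 2,
      Real.sqrt_pos.mpr (by norm_num : (0:ℝ) < 2)]
  have cos_le_sin : ∀ φ ∈ Set.Icc (π/4:ℝ) (π/2), Real.cos φ ≤ Real.sin φ := by
    intro φ hφ
    have h := Real.sin_nonneg_of_nonneg_of_le_pi (x := φ - π/4)
      (by linarith [hφ.1]) (by linarith [hφ.2, Real.pi_pos])
    rw [Real.sin_sub, Real.cos_pi_div_four, Real.sin_pi_div_four] at h
    nlinarith [Real.sq_sqrt (by norm_num : (0:ℝ) ≤ 2), Real.sqrt_nonneg 2,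
      Real.sqrt_pos.mpr (by norm_num : (0:ℝ) < 2)]
  have piece1 : (∫ φ in (0:ℝ)..(π/4), H φ)
      = ∫ φ in (0:ℝ)..(π/4), Real.exp (-x ^ 2 / (2 * Real.sin φ ^ 2)) := by
    apply intervalIntegral.integral_congr
    intro φ hφ
    rw [Set.uIcc_of_le (by linarith)] at hφ
    rw [hH]
    simp only
    rw [min_eq_left (sin_le_cos φ hφ)]
  have piece2 : (∫ φ in (π/4:ℝ)..(π/2), H φ)
      = ∫ φ in (0:ℝ)..(π/4), Real.exp (-x ^ 2 / (2 * Real.sin φ ^ 2)) := by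
    have e1 : (∫ φ in (π/4:ℝ)..(π/2), H φ)
        = ∫ φ in (π/4:ℝ)..(π/2), Real.exp (-x ^ 2 / (2 * Real.cos φ ^ 2)) := by
      apply intervalIntegral.integral_congr
      intro φ hφ
      rw [Set.uIcc_of_le (by linarith)] at hφ
      rw [hH]
      simp only
      rw [min_eq_right (cos_le_sin φ hφ)]
    rw [e1]
    have e2 := intervalIntegral.integral_comp_sub_left (a := (0:ℝ)) (b := π/4)
      (fun u => Real.exp (-x ^ 2 / (2 * Real.cos u ^ 2))) (π/2)
    rw [show π/2 - π/4 = π/4 by ring, show π/2 - (0:ℝ) = π/2 by ring] at e2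
    rw [← e2]
    apply intervalIntegral.integral_congr
    intro φ _
    simp only [Real.cos_pi_div_two_sub]
  -- put everything together
  rw [step1, step2, step3]
  have hinner : (∫ φ in Set.Ioo (-π) π, ∫ r in Set.Ioi (0:ℝ), g (r, φ))
      = ∫ φ in Set.Ioo (-π) π,
          (if 0 < Real.sin φ ∧ 0 < Real.cos φ then H φ else 0) := by
    apply setIntegral_congr_fun measurableSet_Ioo
    intro φ _
    exact inner_eval φ
  rw [hinner, step5, split, piece1, piece2]
  ring

lemma thetaIntegral {v : ℝ} (hv : 0 ≤ v) :
    (∫ t in Set.Ioo (-(π/4)) (π/4), (1 - Real.exp (-(v / (1 - |Real.sin (2*t)|)))))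
      = π/2 - 2 * ∫ φ in (0:ℝ)..(π/4), Real.exp (-v / (2 * Real.sin φ ^ 2)) := by
  have hπ := Real.pi_pos
  set q : ℝ → ℝ := fun t => Real.exp (-(v / (1 - |Real.sin (2*t)|))) with hq
  have hqm : Measurable q := by
    apply Real.measurable_exp.comp
    apply Measurable.neg
    apply Measurable.div measurable_const
    exact measurable_const.sub ((Real.measurable_sin.comp
      (measurable_const.mul measurable_id)).abs)
  have hmnn : ∀ t : ℝ, 0 ≤ 1 - |Real.sin (2*t)| := by
    intro t
    have := abs_le.mpr ⟨Real.neg_one_le_sin (2*t), Real.sin_le_one (2*t)⟩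
    linarith
  have hqb : ∀ t, |q t| ≤ 1 := by
    intro t
    rw [hq]
    simp only
    rw [abs_of_pos (Real.exp_pos _)]
    apply Real.exp_le_one_iff.mpr
    apply neg_nonpos_of_nonneg
    exact div_nonneg hv (hmnn t)
  have hqi : ∀ a b : ℝ, IntervalIntegrable q volume a b := by
    intro a b
    rw [intervalIntegrable_iff]
    exact my_integrableOn hqm 1 hqb measure_Ioc_lt_top
  -- split off the constant
  have hsplit : (∫ t in Set.Ioo (-(π/4)) (π/4), (1 - q t))
      = π/2 - ∫ t in Set.Ioo (-(π/4)) (π/4), q t := by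
    rw [integral_sub (integrableOn_const (C := (1:ℝ)) measure_Ioo_lt_top.ne)
      (my_integrableOn hqm 1 hqb measure_Ioo_lt_top)]
    congr 1
    rw [setIntegral_const, measureReal_def, Real.volume_Ioo, smul_eq_mul, mul_one,
      ENNReal.toReal_ofReal (by linarith)]
    ring
  rw [hsplit]
  congr 1
  -- convert to an interval integral and use evenness
  have hoc : (∫ t in Set.Ioo (-(π/4)) (π/4), q t) = ∫ t in (-(π/4))..(π/4), q t := by
    rw [intervalIntegral.integral_of_le (by linarith), integral_Ioc_eq_integral_Ioo]
  have heven : (∫ t in (-(π/4))..(0:ℝ), q t) = ∫ t in (0:ℝ)..(π/4), q t := by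
    have h1 := intervalIntegral.integral_comp_neg (a := (0:ℝ)) (b := π/4) (f := q)
    rw [neg_zero] at h1
    rw [← h1]
    apply intervalIntegral.integral_congr
    intro t _
    rw [hq]
    simp only
    rw [mul_neg, Real.sin_neg, abs_neg]
  have hadj : (∫ t in (-(π/4))..(π/4), q t)
      = (∫ t in (-(π/4))..(0:ℝ), q t) + ∫ t in (0:ℝ)..(π/4), q t :=
    (intervalIntegral.integral_add_adjacent_intervals (hqi _ _) (hqi _ _)).symm
  rw [hoc, hadj, heven, ← two_mul]
  congr 1
  -- on [0, π/4] drop the absolute value, then substitute t ↦ π/4 - t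
  have habs : (∫ t in (0:ℝ)..(π/4), q t)
      = ∫ t in (0:ℝ)..(π/4), Real.exp (-(v / (1 - Real.sin (2*t)))) := by
    apply intervalIntegral.integral_congr
    intro t ht
    rw [Set.uIcc_of_le (by linarith)] at ht
    rw [hq]
    simp only
    rw [abs_of_nonneg (Real.sin_nonneg_of_nonneg_of_le_pi (by linarith [ht.1])
      (by linarith [ht.2]))]
  rw [habs]
  have hsub := intervalIntegral.integral_comp_sub_left (a := (0:ℝ)) (b := π/4)
    (fun u => Real.exp (-(v / (1 - Real.sin (2*u))))) (π/4)
  rw [show π/4 - π/4 = (0:ℝ) by ring, sub_zero] at hsub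
  rw [← hsub]
  apply intervalIntegral.integral_congr
  intro t _
  simp only
  have hid : 1 - Real.sin (2 * (π/4 - t)) = 2 * Real.sin t ^ 2 := by
    have h1 : 2 * (π/4 - t) = π/2 - 2*t := by ring
    rw [h1, Real.sin_pi_div_two_sub, Real.cos_two_mul]
    have := Real.sin_sq_add_cos_sq t
    nlinarith
  rw [hid, neg_div]

end helpers

/-- Distribution of the per-branch selection statistic `V = W(1 − |sin 2θ|)`:
`P(V ≤ v) = 1 − 4(Q(√v))²` for `v ≥ 0`. -/
theorem stmt10
    {Ω : Type*} [MeasurableSpace Ω] (P : Measure Ω) [IsProbabilityMeasure P]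
    (W θ : Ω → ℝ) (hW : Measurable W) (hθ : Measurable θ)
    (hWlaw : Measure.map W P = expMeasure 1)
    (hθlaw : Measure.map θ P = unifOn (-(π / 4)) (π / 4))
    (hindep : IndepFun W θ P) :
    ∀ v : ℝ, 0 ≤ v →
      (P {ω | W ω * (1 - |Real.sin (2 * θ ω)|) ≤ v}).toReal
        = 1 - 4 * gaussQ (Real.sqrt v) ^ 2 := by
  intro v hv
  have hπ := Real.pi_pos
  haveI : IsProbabilityMeasure (expMeasure 1) := isProbabilityMeasure_expMeasure one_pos
  haveI hfin : IsFiniteMeasure (unifOn (-(π / 4)) (π / 4)) := by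
    constructor
    rw [unifOn, Measure.smul_apply, smul_eq_mul, Measure.restrict_apply_univ]
    have := Real.pi_gt_three
    exact ENNReal.mul_lt_top (lt_of_le_of_lt (ENNReal.inv_le_one.mpr
      (ENNReal.one_le_ofReal.mpr (by linarith))) ENNReal.one_lt_top) measure_Ioo_lt_top
  -- the joint law
  have hjoint : Measure.map (fun ω => (W ω, θ ω)) P
      = (expMeasure 1).prod (unifOn (-(π / 4)) (π / 4)) := by
    rw [← hWlaw, ← hθlaw]
    exact (indepFun_iff_map_prod_eq_prod_map_map hW.aemeasurable hθ.aemeasurable).mp hindep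
  have hS' : MeasurableSet {p : ℝ × ℝ | p.2 * (1 - |Real.sin (2 * p.1)|) ≤ v} := by
    apply measurableSet_le _ measurable_const
    exact measurable_snd.mul (measurable_const.sub ((Real.measurable_sin.comp
      (measurable_const.mul measurable_fst)).abs))
  have hS : MeasurableSet {p : ℝ × ℝ | p.1 * (1 - |Real.sin (2 * p.2)|) ≤ v} := by
    apply measurableSet_le _ measurable_const
    exact measurable_fst.mul (measurable_const.sub ((Real.measurable_sin.comp
      (measurable_const.mul measurable_snd)).abs))
  have hev : {ω | W ω * (1 - |Real.sin (2 * θ ω)|) ≤ v}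
      = (fun ω => (W ω, θ ω)) ⁻¹' {p : ℝ × ℝ | p.1 * (1 - |Real.sin (2 * p.2)|) ≤ v} := rfl
  have hPmeas : P {ω | W ω * (1 - |Real.sin (2 * θ ω)|) ≤ v}
      = ((unifOn (-(π / 4)) (π / 4)).prod (expMeasure 1))
          {p : ℝ × ℝ | p.2 * (1 - |Real.sin (2 * p.1)|) ≤ v} := by
    have hswap : ((unifOn (-(π / 4)) (π / 4)).prod (expMeasure 1))
          {p : ℝ × ℝ | p.2 * (1 - |Real.sin (2 * p.1)|) ≤ v}
        = ((expMeasure 1).prod (unifOn (-(π / 4)) (π / 4)))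
            {p : ℝ × ℝ | p.1 * (1 - |Real.sin (2 * p.2)|) ≤ v} := by
      rw [← Measure.prod_swap, Measure.map_apply measurable_swap hS']
      rfl
    rw [hev, ← Measure.map_apply (hW.prodMk hθ) hS, hjoint]
    exact hswap.symm
  -- disintegrate
  have hprod : ((unifOn (-(π / 4)) (π / 4)).prod (expMeasure 1))
        {p : ℝ × ℝ | p.2 * (1 - |Real.sin (2 * p.1)|) ≤ v}
      = ∫⁻ t, expMeasure 1 {w : ℝ | w * (1 - |Real.sin (2 * t)|) ≤ v}
          ∂(unifOn (-(π / 4)) (π / 4)) := by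
    rw [Measure.prod_apply hS']
    rfl
  -- compute the inner measure on the support
  have hcdf : ∀ t ∈ Set.Ioo (-(π/4)) (π/4),
      expMeasure 1 {w : ℝ | w * (1 - |Real.sin (2 * t)|) ≤ v}
        = ENNReal.ofReal (1 - Real.exp (-(v / (1 - |Real.sin (2*t)|)))) := by
    intro t ht
    have hcos : 0 < Real.cos (2*t) :=
      Real.cos_pos_of_mem_Ioo ⟨by linarith [ht.1], by linarith [ht.2]⟩
    have hm : 0 < 1 - |Real.sin (2*t)| := by
      have h1 : Real.sin (2*t) ^ 2 < 1 := by
        nlinarith [Real.sin_sq_add_cos_sq (2*t)]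
      have h2 : |Real.sin (2*t)| < 1 := abs_lt.mpr
        ⟨by nlinarith [sq_nonneg (Real.sin (2*t) + 1)],
         by nlinarith [sq_nonneg (Real.sin (2*t) - 1)]⟩
      linarith
    have hpre : {w : ℝ | w * (1 - |Real.sin (2 * t)|) ≤ v}
        = Set.Iic (v / (1 - |Real.sin (2*t)|)) := by
      ext w
      rw [Set.mem_setOf_eq, Set.mem_Iic, le_div_iff₀ hm]
    rw [hpre, expMeasure_Iic (div_nonneg hv hm.le)]
  -- turn the lintegral over unifOn into a real integral
  set e : ℝ → ℝ := fun t => 1 - Real.exp (-(v / (1 - |Real.sin (2*t)|))) with he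
  have hmnn : ∀ t : ℝ, 0 ≤ 1 - |Real.sin (2*t)| := by
    intro t
    have := abs_le.mpr ⟨Real.neg_one_le_sin (2*t), Real.sin_le_one (2*t)⟩
    linarith
  have hem : Measurable e := by
    apply measurable_const.sub
    apply Real.measurable_exp.comp
    apply Measurable.neg
    apply Measurable.div measurable_const
    exact measurable_const.sub ((Real.measurable_sin.comp
      (measurable_const.mul measurable_id)).abs)
  have henn : ∀ t, 0 ≤ e t := by
    intro t
    rw [he]
    simp only
    have : Real.exp (-(v / (1 - |Real.sin (2*t)|))) ≤ 1 :=
      Real.exp_le_one_iff.mpr (neg_nonpos_of_nonneg (div_nonneg hv (hmnn t)))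
    linarith
  have heb : ∀ t, |e t| ≤ 1 := by
    intro t
    rw [abs_of_nonneg (henn t)]
    rw [he]
    simp only
    have := Real.exp_pos (-(v / (1 - |Real.sin (2*t)|)))
    linarith
  have hei : IntegrableOn e (Set.Ioo (-(π/4)) (π/4)) volume :=
    my_integrableOn hem 1 heb measure_Ioo_lt_top
  have hlint : (∫⁻ t, expMeasure 1 {w : ℝ | w * (1 - |Real.sin (2 * t)|) ≤ v}
        ∂(unifOn (-(π / 4)) (π / 4)))
      = (ENNReal.ofReal (π/2))⁻¹
          * ENNReal.ofReal (∫ t in Set.Ioo (-(π/4)) (π/4), e t) := by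
    rw [unifOn, lintegral_smul_measure]
    congr 1
    · congr 1
      ring
    · rw [setLIntegral_congr_fun measurableSet_Ioo hcdf,
        ← ofReal_integral_eq_lintegral_ofReal hei
          (Filter.Eventually.of_forall (fun t => henn t))]
  -- put it together and compute
  rw [hPmeas, hprod, hlint]
  have hI : (∫ t in Set.Ioo (-(π/4)) (π/4), e t)
      = π/2 - 2 * ∫ φ in (0:ℝ)..(π/4), Real.exp (-v / (2 * Real.sin φ ^ 2)) :=
    thetaIntegral hv
  rw [ENNReal.toReal_mul, ENNReal.toReal_inv, ENNReal.toReal_ofReal (by linarith),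
    ENNReal.toReal_ofReal (setIntegral_nonneg measurableSet_Ioo (fun t _ => henn t)), hI]
  -- the Q-function side
  have hQ : gaussQ (Real.sqrt v) ^ 2
      = (2*π)⁻¹ * (2 * ∫ φ in (0:ℝ)..(π/4), Real.exp (-v / (2 * Real.sin φ ^ 2))) := by
    rw [gaussQ, mul_pow, craig (Real.sqrt_nonneg v), inv_pow,
      Real.sq_sqrt (by positivity : (0:ℝ) ≤ 2*π)]
    congr 2
    exact intervalIntegral.integral_congr (fun φ _ => by rw [Real.sq_sqrt hv])
  rw [hQ]
  have hπ0 : (π:ℝ) ≠ 0 := Real.pi_ne_zero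
  field_simp
  ring
end

section
/- For every x ≥ 0, (Q(x))² = (1/π) · ∫_0^{π/4} exp( −x² / (2·sin²φ) ) dφ. (The finite-integral representation of the squared Gaussian Q-function, equation (Qsq), used throughout the selection-combining analysis.) -/
open MeasureTheory Real

open Set Filter

noncomputable def g0 (t : ℝ) : ℝ := Real.exp (-t ^ 2 / 2)

lemma g0_eq : (fun t : ℝ => Real.exp (-(1/2) * t^2)) = g0 := by
  funext t; unfold g0; congr 1; ring

lemma g0_cont : Continuous g0 := by unfold g0; fun_prop

lemma g0_integrable : Integrable g0 := by
  have h := integrable_exp_neg_mul_sq (by norm_num : (0:ℝ) < 1/2)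
  rwa [g0_eq] at h

lemma g0_Ioi0 : ∫ t in Set.Ioi (0:ℝ), g0 t = Real.sqrt (2*π) / 2 := by
  have h := integral_gaussian_Ioi (1/2)
  rw [g0_eq] at h
  rw [h]
  rw [show π / (1/2) = 2*π by ring]

lemma intIoi_eq (x : ℝ) :
    (∫ t in Set.Ioi x, g0 t)
      = (∫ t : ℝ, g0 t) - (∫ t in Set.Iic (0:ℝ), g0 t) - ∫ t in (0:ℝ)..x, g0 t := by
  have h1 : (∫ t in Set.Iic x, g0 t) + (∫ t in Set.Ioi x, g0 t) = ∫ t : ℝ, g0 t :=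
    intervalIntegral.integral_Iic_add_Ioi g0_integrable.integrableOn g0_integrable.integrableOn
  have h2 : (∫ t in Set.Iic x, g0 t) - (∫ t in Set.Iic (0:ℝ), g0 t) = ∫ t in (0:ℝ)..x, g0 t :=
    intervalIntegral.integral_Iic_sub_Iic g0_integrable.integrableOn g0_integrable.integrableOn
  linarith

lemma gaussQ_eq (x : ℝ) :
    gaussQ x = (Real.sqrt (2 * Real.pi))⁻¹ *
      ((∫ t : ℝ, g0 t) - (∫ t in Set.Iic (0:ℝ), g0 t) - ∫ t in (0:ℝ)..x, g0 t) := by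
  rw [gaussQ, ← intIoi_eq]; rfl

lemma gaussQ_cont : Continuous gaussQ := by
  have : Continuous fun x : ℝ => ∫ t in (0:ℝ)..x, g0 t :=
    intervalIntegral.continuous_primitive (fun a b => g0_integrable.intervalIntegrable) 0
  simp only [funext gaussQ_eq]
  fun_prop

lemma gaussQ_hasDeriv (x : ℝ) :
    HasDerivAt gaussQ (-((Real.sqrt (2 * Real.pi))⁻¹ * g0 x)) x := by
  have h : HasDerivAt (fun y : ℝ => ∫ t in (0:ℝ)..y, g0 t) (g0 x) x :=
    intervalIntegral.integral_hasDerivAt_right g0_integrable.intervalIntegrable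
      (g0_cont.stronglyMeasurableAtFilter _ _) g0_cont.continuousAt
  have h2 := ((h.const_sub ((∫ t : ℝ, g0 t) - (∫ t in Set.Iic (0:ℝ), g0 t))).const_mul ((Real.sqrt (2 * Real.pi))⁻¹ : ℝ))
  have heq : gaussQ = fun x => (Real.sqrt (2 * Real.pi))⁻¹ *
      ((∫ t : ℝ, g0 t) - (∫ t in Set.Iic (0:ℝ), g0 t) - ∫ t in (0:ℝ)..x, g0 t) := funext gaussQ_eq
  rw [heq]
  refine h2.congr_deriv ?_
  ring

noncomputable def G (x : ℝ) : ℝ :=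
  ∫ φ in Set.Ioc (0:ℝ) (π/4), Real.exp (-x ^ 2 / (2 * Real.sin φ ^ 2))

lemma pi4_pos : (0:ℝ) < π/4 := by positivity

lemma sin_pos_mem {φ : ℝ} (h : φ ∈ Set.Ioc (0:ℝ) (π/4)) : 0 < Real.sin φ := by
  apply Real.sin_pos_of_pos_of_lt_pi h.1
  have := Real.pi_pos
  linarith [h.2]

lemma F_meas (x : ℝ) :
    AEStronglyMeasurable (fun φ => Real.exp (-x ^ 2 / (2 * Real.sin φ ^ 2)))
      (volume.restrict (Set.Ioc (0:ℝ) (π/4))) := by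
  apply Measurable.aestronglyMeasurable
  measurability

lemma F_le_one (x φ : ℝ) : ‖Real.exp (-x ^ 2 / (2 * Real.sin φ ^ 2))‖ ≤ 1 := by
  rw [Real.norm_eq_abs, abs_of_pos (Real.exp_pos _), Real.exp_le_one_iff]
  apply div_nonpos_of_nonpos_of_nonneg
  · simp [sq_nonneg x]
  · positivity

lemma F_int (x : ℝ) :
    Integrable (fun φ => Real.exp (-x ^ 2 / (2 * Real.sin φ ^ 2)))
      (volume.restrict (Set.Ioc (0:ℝ) (π/4))) := by
  apply Integrable.mono' (integrable_const 1) (F_meas x)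
  exact Filter.Eventually.of_forall fun φ => F_le_one x φ

lemma G_cont : Continuous G := by
  apply continuous_of_dominated F_meas (fun x => Filter.Eventually.of_forall (F_le_one x))
    (integrable_const 1)
  rw [ae_restrict_iff' measurableSet_Ioc]
  refine Filter.Eventually.of_forall fun φ hφ => ?_
  have hs : (0:ℝ) < Real.sin φ := sin_pos_mem hφ
  have h2 : (2 * Real.sin φ ^ 2) ≠ 0 := by positivity
  fun_prop (disch := assumption)

lemma exp_neg_le {t : ℝ} (ht : 0 < t) : Real.exp (-t) ≤ t⁻¹ := by
  rw [Real.exp_neg]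
  exact inv_anti₀ ht (by linarith [Real.add_one_le_exp t])

lemma G_hasDeriv {x₀ : ℝ} (hx : 0 < x₀) :
    HasDerivAt G (∫ φ in Set.Ioc (0:ℝ) (π/4),
      -(x₀ / Real.sin φ ^ 2 * Real.exp (-x₀ ^ 2 / (2 * Real.sin φ ^ 2)))) x₀ := by
  have key := hasDerivAt_integral_of_dominated_loc_of_deriv_le
    (μ := volume.restrict (Set.Ioc (0:ℝ) (π/4)))
    (F := fun x φ => Real.exp (-x ^ 2 / (2 * Real.sin φ ^ 2)))
    (F' := fun x φ => -(x / Real.sin φ ^ 2 * Real.exp (-x ^ 2 / (2 * Real.sin φ ^ 2))))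
    (x₀ := x₀) (s := Metric.ball x₀ (x₀/2)) (bound := fun _ => 4/x₀)
    (Metric.ball_mem_nhds x₀ (by linarith : (0:ℝ) < x₀/2))
    (Filter.Eventually.of_forall F_meas)
    (F_int x₀)
    ?meas' ?bound (integrable_const _) ?diff
  · exact key.2
  case meas' =>
    apply Measurable.aestronglyMeasurable
    measurability
  case bound =>
    rw [ae_restrict_iff' measurableSet_Ioc]
    refine Filter.Eventually.of_forall fun φ hφ x hxb => ?_
    have hs : (0:ℝ) < Real.sin φ := sin_pos_mem hφ
    have hs2 : (0:ℝ) < Real.sin φ ^ 2 := by positivity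
    rw [Metric.mem_ball, Real.dist_eq, abs_lt] at hxb
    have hxpos : 0 < x := by linarith [hxb.1]
    have hexp : Real.exp (-x ^ 2 / (2 * Real.sin φ ^ 2)) ≤ 2 * Real.sin φ ^ 2 / x ^ 2 := by
      have ht : 0 < x ^ 2 / (2 * Real.sin φ ^ 2) := by positivity
      have := exp_neg_le ht
      rw [show -(x ^ 2 / (2 * Real.sin φ ^ 2)) = -x ^ 2 / (2 * Real.sin φ ^ 2) by ring,
        inv_div] at this
      exact this
    rw [Real.norm_eq_abs, abs_neg, abs_of_nonneg (by positivity)]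
    calc x / Real.sin φ ^ 2 * Real.exp (-x ^ 2 / (2 * Real.sin φ ^ 2))
        ≤ x / Real.sin φ ^ 2 * (2 * Real.sin φ ^ 2 / x ^ 2) := by
          apply mul_le_mul_of_nonneg_left hexp (by positivity)
      _ = 2 / x := by field_simp
      _ ≤ 4 / x₀ := by
          rw [div_le_div_iff₀ hxpos hx]
          nlinarith [hxb.1]
  case diff =>
    rw [ae_restrict_iff' measurableSet_Ioc]
    refine Filter.Eventually.of_forall fun φ hφ x _ => ?_
    have hs : (0:ℝ) < Real.sin φ := sin_pos_mem hφ
    have hs2 : (0:ℝ) < Real.sin φ ^ 2 := by positivity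
    have hd : HasDerivAt (fun x : ℝ => -x ^ 2 / (2 * Real.sin φ ^ 2))
        (-x / Real.sin φ ^ 2) x := by
      have h1 := ((hasDerivAt_pow 2 x).neg).div_const (2 * Real.sin φ ^ 2)
      refine h1.congr_deriv ?_
      field_simp
      ring
    have := hd.exp
    refine this.congr_deriv ?_
    ring

lemma cot_image {x : ℝ} (hx : 0 < x) :
    (fun φ => x * Real.cos φ / Real.sin φ) '' Set.Ioo 0 (π/4) = Set.Ioi x := by
  have hπ := Real.pi_pos
  ext u
  constructor
  · rintro ⟨φ, hφ, rfl⟩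
    have hs : 0 < Real.sin φ := Real.sin_pos_of_pos_of_lt_pi hφ.1 (by linarith [hφ.2])
    have hcos : Real.cos (π/4) < Real.cos φ :=
      Real.cos_lt_cos_of_nonneg_of_le_pi hφ.1.le (by linarith) hφ.2
    have hsin : Real.sin φ < Real.sin (π/4) := by
      apply Real.strictMonoOn_sin ⟨by linarith [hφ.1], by linarith [hφ.2]⟩
        ⟨by linarith, by linarith⟩ hφ.2
    rw [Real.cos_pi_div_four] at hcos
    rw [Real.sin_pi_div_four] at hsin
    have h1 : Real.sin φ < Real.cos φ := by linarith
    show x < x * Real.cos φ / Real.sin φ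
    rw [lt_div_iff₀ hs]
    nlinarith
  · intro hu
    have hu' : x < u := hu
    have hupos : 0 < u := lt_trans hx hu'
    set A := Real.arctan (x/u) with hA
    have hA1 : 0 < A := by
      have := Real.arctan_strictMono (show (0:ℝ) < x/u by positivity)
      rwa [Real.arctan_zero] at this
    have hA2 : A < π/4 := by
      rw [← Real.arctan_one]
      exact Real.arctan_strictMono ((div_lt_one hupos).2 hu')
    have hc : 0 < Real.cos A := Real.cos_arctan_pos _
    have h1 : Real.sin A / Real.cos A = x / u := by
      rw [← Real.tan_eq_sin_div_cos, hA, Real.tan_arctan]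
    have h2 : Real.sin A * u = x * Real.cos A := by
      rwa [div_eq_div_iff hc.ne' hupos.ne'] at h1
    have hsA : 0 < Real.sin A :=
      Real.sin_pos_of_pos_of_lt_pi hA1 (by linarith)
    refine ⟨A, ⟨hA1, hA2⟩, ?_⟩
    show x * Real.cos A / Real.sin A = u
    rw [div_eq_iff hsA.ne']
    linarith

lemma sin_pos_mem' {φ : ℝ} (h : φ ∈ Set.Ioo (0:ℝ) (π/4)) : 0 < Real.sin φ :=
  Real.sin_pos_of_pos_of_lt_pi h.1 (by linarith [h.2, Real.pi_pos])

lemma cot_injOn {x : ℝ} (hx : 0 < x) :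
    Set.InjOn (fun φ => x * Real.cos φ / Real.sin φ) (Set.Ioo 0 (π/4)) := by
  have hπ := Real.pi_pos
  have anti : StrictAntiOn (fun φ => x * Real.cos φ / Real.sin φ) (Set.Ioo 0 (π/4)) := by
    intro a ha b hb hab
    have hsa : 0 < Real.sin a := sin_pos_mem' ha
    have hsb : 0 < Real.sin b := sin_pos_mem' hb
    show x * Real.cos b / Real.sin b < x * Real.cos a / Real.sin a
    rw [div_lt_div_iff₀ hsb hsa]
    have hsab : 0 < Real.sin (b - a) :=
      Real.sin_pos_of_pos_of_lt_pi (by linarith) (by linarith [hb.2, ha.1])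
    rw [Real.sin_sub] at hsab
    nlinarith [mul_pos hx hsab]
  exact anti.injOn

lemma cot_hasDeriv (x φ : ℝ) (hs : Real.sin φ ≠ 0) :
    HasDerivAt (fun φ => x * Real.cos φ / Real.sin φ) (-(x / Real.sin φ ^ 2)) φ := by
  have h := ((Real.hasDerivAt_cos φ).const_mul x).div (Real.hasDerivAt_sin φ) hs
  refine h.congr_deriv ?_
  have h1 := Real.sin_sq_add_cos_sq φ
  field_simp
  linear_combination (-x) * h1

lemma subst {x : ℝ} (hx : 0 < x) :
    (∫ φ in Set.Ioc (0:ℝ) (π/4),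
        x / Real.sin φ ^ 2 * Real.exp (-x ^ 2 / (2 * Real.sin φ ^ 2)))
      = ∫ u in Set.Ioi x, Real.exp (-(x ^ 2 + u ^ 2) / 2) := by
  rw [integral_Ioc_eq_integral_Ioo,
    show Set.Ioi x = (fun φ => x * Real.cos φ / Real.sin φ) '' Set.Ioo 0 (π/4) from
      (cot_image hx).symm,
    integral_image_eq_integral_abs_deriv_smul measurableSet_Ioo
      (fun φ hφ => (cot_hasDeriv x φ (sin_pos_mem' hφ).ne').hasDerivWithinAt)
      (cot_injOn hx)]
  apply setIntegral_congr_fun measurableSet_Ioo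
  intro φ hφ
  have hs : 0 < Real.sin φ := sin_pos_mem' hφ
  have hs2 : (0:ℝ) < Real.sin φ ^ 2 := by positivity
  show x / Real.sin φ ^ 2 * Real.exp (-x ^ 2 / (2 * Real.sin φ ^ 2))
      = |(-(x / Real.sin φ ^ 2))| • Real.exp (-(x ^ 2 + (x * Real.cos φ / Real.sin φ) ^ 2) / 2)
  rw [smul_eq_mul, abs_neg, abs_of_pos (by positivity)]
  congr 2
  have h1 := Real.sin_sq_add_cos_sq φ
  field_simp
  linear_combination h1

lemma split_exp (x : ℝ) :
    (∫ u in Set.Ioi x, Real.exp (-(x ^ 2 + u ^ 2) / 2)) = g0 x * ∫ u in Set.Ioi x, g0 u := by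
  rw [← integral_const_mul]
  congr 1
  funext u
  unfold g0
  rw [← Real.exp_add]
  congr 1
  ring

lemma G_deriv_eq {x : ℝ} (hx : 0 < x) :
    HasDerivAt G (-(g0 x * ∫ u in Set.Ioi x, g0 u)) x := by
  have h := G_hasDeriv hx
  rwa [integral_neg, subst hx, split_exp] at h

lemma sqrt2pi_pos : (0:ℝ) < Real.sqrt (2*π) := Real.sqrt_pos.2 (by positivity)

lemma D_deriv {x : ℝ} (hx : 0 < x) :
    HasDerivAt (fun y => π * gaussQ y ^ 2 - G y) 0 x := by
  have h1 := ((gaussQ_hasDeriv x).pow 2).const_mul π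
  have h2 := G_deriv_eq hx
  have h3 := h1.sub h2
  refine h3.congr_deriv ?_
  rw [gaussQ]
  have hsq : Real.sqrt (2*π) ^ 2 = 2*π := Real.sq_sqrt (by positivity)
  set I := ∫ t in Set.Ioi x, Real.exp (-t ^ 2 / 2) with hI
  have hIg : (∫ u in Set.Ioi x, g0 u) = I := rfl
  rw [hIg]
  have h2' : Real.sqrt 2 ^ 2 = 2 := Real.sq_sqrt (by norm_num)
  have hπ' : Real.sqrt π ^ 2 = π := Real.sq_sqrt Real.pi_pos.le
  field_simp
  ring_nf
  have hs' : Real.sqrt (π * 2) ^ 2 = π * 2 := Real.sq_sqrt (by positivity)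
  have hinv : Real.sqrt (π * 2) * (Real.sqrt (π * 2))⁻¹ = 1 := mul_inv_cancel₀ (by positivity)
  linear_combination (g0 x * I * (Real.sqrt (π * 2))⁻¹) * hs' - (g0 x * I * Real.sqrt (π * 2)) * hinv

lemma gaussQ_zero : gaussQ 0 = 1/2 := by
  rw [gaussQ]
  have : (∫ t in Set.Ioi (0:ℝ), Real.exp (-t ^ 2 / 2)) = Real.sqrt (2*π) / 2 := g0_Ioi0
  rw [this]
  field_simp

lemma G_zero : G 0 = π/4 := by
  unfold G
  have : ∀ φ : ℝ, Real.exp (-(0:ℝ) ^ 2 / (2 * Real.sin φ ^ 2)) = 1 := by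
    intro φ; norm_num
  simp_rw [this]
  rw [setIntegral_const]
  simp [Real.volume_Ioc, ENNReal.toReal_ofReal (by positivity : (0:ℝ) ≤ π/4)]
  positivity

lemma D_eq_zero {x : ℝ} (hx : 0 ≤ x) : π * gaussQ x ^ 2 - G x = 0 := by
  set D := fun y : ℝ => π * gaussQ y ^ 2 - G y with hD
  have Dcont : Continuous D := (continuous_const.mul (gaussQ_cont.pow 2)).sub G_cont
  have hD0 : D 0 = 0 := by
    simp only [hD, gaussQ_zero, G_zero]
    ring
  show D x = 0
  rcases hx.eq_or_lt with h | h
  · rw [← h]; exact hD0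
  · have key : ∀ ε ∈ Set.Ioc (0:ℝ) x, D x = D ε := by
      intro ε hε
      exact constant_of_has_deriv_right_zero Dcont.continuousOn
        (fun y hy => (D_deriv (lt_of_lt_of_le hε.1 hy.1)).hasDerivWithinAt)
        x ⟨hε.2, le_rfl⟩
    have h1 : Filter.Tendsto D (nhdsWithin 0 (Set.Ioi 0)) (nhds (D 0)) :=
      (Dcont.tendsto 0).mono_left nhdsWithin_le_nhds
    have h2 : Filter.Tendsto D (nhdsWithin 0 (Set.Ioi 0)) (nhds (D x)) := by
      apply Filter.Tendsto.congr' _ tendsto_const_nhds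
      filter_upwards [Ioc_mem_nhdsGT_of_mem ⟨le_rfl, h⟩] with ε hε
      exact key ε hε
    rw [tendsto_nhds_unique h2 h1]
    exact hD0

/-- The finite-integral representation of the squared Gaussian Q-function:
`(Q(x))² = (1/π) ∫_0^{π/4} exp(−x²/(2 sin²φ)) dφ` for `x ≥ 0`. -/
theorem stmt11 (x : ℝ) (hx : 0 ≤ x) :
    gaussQ x ^ 2
      = (1 / π) * ∫ φ in (0 : ℝ)..(π / 4), Real.exp (-x ^ 2 / (2 * Real.sin φ ^ 2)) := by
  rw [intervalIntegral.integral_of_le (by positivity : (0:ℝ) ≤ π/4)]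
  have h := D_eq_zero hx
  have hG : G x = ∫ φ in Set.Ioc (0:ℝ) (π/4), Real.exp (-x ^ 2 / (2 * Real.sin φ ^ 2)) := rfl
  rw [← hG]
  have hπ := Real.pi_pos
  field_simp
  linarith
end

section
/- Let N ≥ 1 and set k = ⌈N/2⌉. For ρ > 0 define P̃₁(ρ) = (1/π)·arctan(ρ^{−1/2}) and P(ρ) = Σ_{i=k}^{2k−1} C(2k−1, i) · (P̃₁(ρ))^i · (1 − P̃₁(ρ))^{2k−1−i}, where C(·,·) is the binomial coefficient. Then, as ρ → ∞, 2·P(ρ) − (P(ρ))² = C(2k, k) · (π² · ρ)^{−k/2} + o(ρ^{−k/2}). (High-SNR part of Proposition 5: the QPSK-modulated 2-bit phase-quantized SIMO system with 2-bit quantized CSIR and majority decision achieves diversity gain (1/2)·⌈N/2⌉ and coding gain π²·C(2⌈N/2⌉, ⌈N/2⌉)^{−2/⌈N/2⌉}.) -/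
open Real Filter Asymptotics

/-- High-SNR part of Proposition 5: the QPSK-modulated 2-bit phase-quantized SIMO system with
2-bit quantized CSIR and majority decision achieves diversity gain `⌈N/2⌉/2` and coding gain
`π²·C(2⌈N/2⌉, ⌈N/2⌉)^{−2/⌈N/2⌉}`.  Here `k = ⌈N/2⌉ = (N+1)/2` (natural division). -/
theorem stmt14 (N : ℕ) (hN : 1 ≤ N) (k : ℕ) (hk : k = (N + 1) / 2)
    (P1 Pf : ℝ → ℝ)
    (hP1 : ∀ ρ, P1 ρ = (1 / π) * Real.arctan ((Real.sqrt ρ)⁻¹))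
    (hPf : ∀ ρ, Pf ρ = ∑ i ∈ Finset.Icc k (2 * k - 1),
        ((2 * k - 1).choose i : ℝ) * P1 ρ ^ i * (1 - P1 ρ) ^ (2 * k - 1 - i)) :
    (fun ρ => (2 * Pf ρ - Pf ρ ^ 2)
        - ((2 * k).choose k : ℝ) * (π ^ 2 * ρ) ^ (-(k : ℝ) / 2))
      =o[atTop] fun ρ : ℝ => ρ ^ (-(k : ℝ) / 2) := by
  have hπ : (0:ℝ) < π := pi_pos
  have hk1 : 1 ≤ k := by omega
  set c : ℝ := ((2 * k - 1).choose k : ℝ) with hc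
  -- arctan x / x → 1
  have hslope : Tendsto (fun x : ℝ => Real.arctan x / x) (nhdsWithin 0 {(0:ℝ)}ᶜ) (nhds 1) := by
    have h := Real.hasDerivAt_arctan 0
    rw [hasDerivAt_iff_tendsto_slope] at h
    simp only [slope_fun_def, Real.arctan_zero, sub_zero] at h
    norm_num at h
    exact h.congr fun x => inv_mul_eq_div _ _
  have hsq : Tendsto Real.sqrt atTop atTop :=
    (tendsto_rpow_atTop (by norm_num : (0:ℝ) < 1/2)).congr fun x => (Real.sqrt_eq_rpow x).symm
  have hx0 : Tendsto (fun ρ : ℝ => (Real.sqrt ρ)⁻¹) atTop (nhds 0) :=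
    tendsto_inv_atTop_zero.comp hsq
  have hx : Tendsto (fun ρ : ℝ => (Real.sqrt ρ)⁻¹) atTop (nhdsWithin 0 {(0:ℝ)}ᶜ) := by
    rw [tendsto_nhdsWithin_iff]
    refine ⟨hx0, ?_⟩
    filter_upwards [eventually_gt_atTop (0:ℝ)] with ρ hρ
    exact (inv_pos.mpr (Real.sqrt_pos.mpr hρ)).ne'
  -- h1 : P1 ρ * ρ^(1/2) → π⁻¹
  have h1 : Tendsto (fun ρ : ℝ => P1 ρ * ρ ^ ((1:ℝ)/2)) atTop (nhds π⁻¹) := by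
    have hcomp : Tendsto (fun ρ : ℝ => Real.arctan (Real.sqrt ρ)⁻¹ / (Real.sqrt ρ)⁻¹)
        atTop (nhds 1) := hslope.comp hx
    have h := (tendsto_const_nhds (x := π⁻¹) (f := atTop)).mul hcomp
    rw [mul_one] at h
    refine h.congr' ?_
    filter_upwards [eventually_gt_atTop (0:ℝ)] with ρ hρ
    rw [hP1, ← Real.sqrt_eq_rpow, div_eq_mul_inv, inv_inv, one_div]
    ring
  -- h2 : P1 → 0
  have h2 : Tendsto P1 atTop (nhds 0) := by
    have := (Real.continuous_arctan.tendsto 0).comp hx0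
    have h := (tendsto_const_nhds (x := 1/π) (f := atTop)).mul this
    simp only [Function.comp, Real.arctan_zero, mul_zero] at h
    exact h.congr fun ρ => (hP1 ρ).symm
  have h1m : Tendsto (fun ρ => 1 - P1 ρ) atTop (nhds 1) := by
    simpa using tendsto_const_nhds.sub h2
  -- Pf ρ * ρ^(k/2) → c * π⁻¹^k
  have hPfpow : Tendsto (fun ρ : ℝ => Pf ρ * ρ ^ ((k:ℝ)/2)) atTop (nhds (c * π⁻¹ ^ k)) := by
    have hsum : Tendsto (fun ρ : ℝ => ∑ i ∈ Finset.Icc k (2 * k - 1),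
        ((2 * k - 1).choose i : ℝ) * P1 ρ ^ i * (1 - P1 ρ) ^ (2 * k - 1 - i) * ρ ^ ((k:ℝ)/2))
        atTop (nhds (∑ i ∈ Finset.Icc k (2 * k - 1),
          if i = k then c * π⁻¹ ^ k else 0)) := by
      refine tendsto_finset_sum _ fun i hi => ?_
      simp only [Finset.mem_Icc] at hi
      have base : Tendsto (fun ρ : ℝ => ((2 * k - 1).choose i : ℝ) *
          ((P1 ρ * ρ ^ ((1:ℝ)/2)) ^ i * ((1 - P1 ρ) ^ (2 * k - 1 - i) *
            ρ ^ (((k:ℝ) - i)/2)))) atTop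
          (nhds (if i = k then c * π⁻¹ ^ k else 0)) := by
        by_cases hik : i = k
        · subst hik
          have hE : Tendsto (fun ρ : ℝ => ρ ^ (((i:ℝ) - i)/2)) atTop (nhds 1) := by
            have : ∀ ρ : ℝ, ρ ^ (((i:ℝ) - i)/2) = ρ ^ (0:ℝ) := by
              intro ρ; norm_num
            simp only [this, Real.rpow_zero]
            exact tendsto_const_nhds
          have := (tendsto_const_nhds (x := ((2 * i - 1).choose i : ℝ)) (f := atTop)).mul
            ((h1.pow i).mul ((h1m.pow (2 * i - 1 - i)).mul hE))
          simpa [hc] using this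
        · have hki : k < i := lt_of_le_of_ne hi.1 (Ne.symm hik)
          have hE : Tendsto (fun ρ : ℝ => ρ ^ (((k:ℝ) - i)/2)) atTop (nhds 0) := by
            have he : ((k:ℝ) - i)/2 = -(((i:ℝ) - k)/2) := by ring
            rw [he]
            refine tendsto_rpow_neg_atTop ?_
            have : (k:ℝ) < i := by exact_mod_cast hki
            linarith
          have := (tendsto_const_nhds (x := ((2 * k - 1).choose i : ℝ)) (f := atTop)).mul
            ((h1.pow i).mul ((h1m.pow (2 * k - 1 - i)).mul hE))
          simpa [hik] using this
      refine base.congr' ?_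
      filter_upwards [eventually_gt_atTop (0:ℝ)] with ρ hρ
      have hpow : ρ ^ ((k:ℝ)/2) = (ρ ^ ((1:ℝ)/2)) ^ i * ρ ^ (((k:ℝ) - i)/2) := by
        rw [← Real.rpow_natCast (ρ ^ ((1:ℝ)/2)) i, ← Real.rpow_mul hρ.le,
          ← Real.rpow_add hρ]
        congr 1
        ring
      rw [hpow, mul_pow]
      ring
    have hval : (∑ i ∈ Finset.Icc k (2 * k - 1),
        if i = k then c * π⁻¹ ^ k else 0) = c * π⁻¹ ^ k := by
      rw [Finset.sum_ite_eq' (Finset.Icc k (2 * k - 1)) k (fun _ => c * π⁻¹ ^ k),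
        if_pos (Finset.mem_Icc.mpr ⟨le_refl k, by omega⟩)]
    rw [hval] at hsum
    refine hsum.congr fun ρ => ?_
    rw [hPf, Finset.sum_mul]
  -- Pf → 0
  have hPf0 : Tendsto Pf atTop (nhds 0) := by
    have hrneg : Tendsto (fun ρ : ℝ => ρ ^ (-((k:ℝ)/2))) atTop (nhds 0) :=
      tendsto_rpow_neg_atTop (by positivity)
    have h := hPfpow.mul hrneg
    rw [mul_zero] at h
    refine h.congr' ?_
    filter_upwards [eventually_gt_atTop (0:ℝ)] with ρ hρ
    rw [mul_assoc, ← Real.rpow_add hρ]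
    simp
  -- main limit
  have hmain : Tendsto (fun ρ : ℝ => (2 * Pf ρ - Pf ρ ^ 2) * ρ ^ ((k:ℝ)/2)) atTop
      (nhds (2 * (c * π⁻¹ ^ k))) := by
    have h := ((tendsto_const_nhds (x := (2:ℝ)) (f := atTop)).mul hPfpow).sub
      (hPf0.mul hPfpow)
    rw [zero_mul, sub_zero] at h
    exact h.congr fun ρ => by ring
  -- choose identity
  have hcc : ((2 * k).choose k : ℝ) = 2 * c := by
    have h1' : (2 * k).choose k = (2 * k - 1).choose (k - 1) + (2 * k - 1).choose k := by
      have := Nat.choose_succ_succ (2 * k - 1) (k - 1)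
      simpa [show 2 * k - 1 + 1 = 2 * k by omega, show k - 1 + 1 = k by omega] using this
    have h2' : (2 * k - 1).choose (k - 1) = (2 * k - 1).choose k := by
      have := Nat.choose_symm (show k ≤ 2 * k - 1 by omega)
      simpa [show 2 * k - 1 - k = k - 1 by omega] using this
    rw [hc]
    push_cast [h1', h2']
    ring
  -- conclude
  have hneg : ∀ᶠ ρ : ℝ in atTop, (fun ρ : ℝ => ρ ^ (-(k : ℝ) / 2)) ρ = 0 →
      ((2 * Pf ρ - Pf ρ ^ 2) - ((2 * k).choose k : ℝ) * (π ^ 2 * ρ) ^ (-(k : ℝ) / 2)) = 0 := by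
    filter_upwards [eventually_gt_atTop (0:ℝ)] with ρ hρ h
    exact absurd h (Real.rpow_pos_of_pos hρ _).ne'
  rw [isLittleO_iff_tendsto' hneg]
  have hfin := hmain.sub (tendsto_const_nhds (x := ((2 * k).choose k : ℝ) * π⁻¹ ^ k)
    (f := atTop))
  rw [hcc] at hfin
  rw [show 2 * (c * π⁻¹ ^ k) - 2 * c * π⁻¹ ^ k = 0 by ring] at hfin
  refine hfin.congr' ?_
  filter_upwards [eventually_gt_atTop (0:ℝ)] with ρ hρ
  have hπ2 : ((π:ℝ) ^ 2) ^ (-(k:ℝ)/2) = π⁻¹ ^ k := by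
    rw [← Real.rpow_natCast π 2, ← Real.rpow_mul hπ.le,
      show ((2:ℕ):ℝ) * (-(k:ℝ)/2) = -(k:ℝ) by push_cast; ring,
      Real.rpow_neg hπ.le, Real.rpow_natCast, inv_pow]
  have hsplit : (π ^ 2 * ρ) ^ (-(k:ℝ)/2) = π⁻¹ ^ k * ρ ^ (-(k:ℝ)/2) := by
    rw [Real.mul_rpow (by positivity) hρ.le, hπ2]
  have hcancel : ρ ^ ((k:ℝ)/2) * ρ ^ (-(k:ℝ)/2) = 1 := by
    rw [← Real.rpow_add hρ, show (k:ℝ)/2 + -(k:ℝ)/2 = 0 by ring, Real.rpow_zero]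
  have hne0 : ρ ^ (-(k:ℝ)/2) ≠ 0 := (Real.rpow_pos_of_pos hρ _).ne'
  rw [eq_div_iff hne0, hsplit, hcc]
  linear_combination (2 * Pf ρ - Pf ρ ^ 2) * hcancel
end
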